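/- arXiv:1902.10820 — 4 statements merged into one kernel-verified Lean document; each statement's English description precedes it below -/
import Mathlib

section
/- For all natural numbers m and n, there is a bijection between the set of dimension-preserving graph morphisms from the twisted m-cube to the twisted n-cube and the set of functions f : Fin n → Option Bool such that the number of indices i with f i = none is at most m. -/
/-- Edge relation of the twisted n-cube. -/
def TwE (n : ℕ) (x y : Fin n → Bool) : Prop :=
  x = y ∨ ∃ i : Fin n, (∀ j, j ≠ i → x j = y j) ∧ y i = !(x i) ∧
    (x i = true ↔ Odd (Finset.univ.filter (fun j : Fin n => j < i ∧ x j = false)).card)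

/-- Graph morphisms between directed graphs given by edge relations. -/
def IsGraphHom {V V' : Type*} (E : V → V → Prop) (E' : V' → V' → Prop) (g : V → V') : Prop :=
  ∀ x y, E x y → E' (g x) (g y)

/-- The pair (x, y) is a non-loop edge flipping exactly coordinate i. -/
def Flips {n : ℕ} (x y : Fin n → Bool) (i : Fin n) : Prop :=
  x i ≠ y i ∧ ∀ j, j ≠ i → x j = y j

/-- A map between cube vertex sets is dimension-preserving. -/
def DimPres {m n : ℕ} (g : (Fin m → Bool) → (Fin n → Bool)) : Prop :=
  ∀ x₁ y₁ x₂ y₂ (i : Fin m), Flips x₁ y₁ i → Flips x₂ y₂ i →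
    (g x₁ = g y₁ ∧ g x₂ = g y₂) ∨
    ∃ j : Fin n, Flips (g x₁) (g y₁) j ∧ Flips (g x₂) (g y₂) j

open Finset

namespace S13

/-! ### ZMod 2 and Bool preliminaries -/

abbrev b2 (b : Bool) : ZMod 2 := if b then 1 else 0

lemma zmod2_cases (z : ZMod 2) : z = 0 ∨ z = 1 := by revert z; decide

lemma odd_iff_c2 (a : ℕ) : Odd a ↔ (a : ZMod 2) = 1 := by
  rw [Nat.odd_iff, ← ZMod.natCast_mod a 2]
  rcases Nat.mod_two_eq_zero_or_one a with h | h <;> rw [h] <;> simp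

lemma conv1 (b : Bool) (a : ℕ) : (b = true ↔ Odd a) ↔ b2 b = (a : ZMod 2) := by
  rw [odd_iff_c2]
  rcases zmod2_cases (a : ZMod 2) with h | h <;> rw [h] <;> cases b <;> simp

lemma conv3 (a : ℕ) : b2 (decide (Odd a)) = (a : ZMod 2) := by
  by_cases h : Odd a
  · simp [h, (odd_iff_c2 a).mp h]
  · have : (a : ZMod 2) = 0 := by
      rcases zmod2_cases (a : ZMod 2) with h2 | h2
      · exact h2
      · exact absurd ((odd_iff_c2 a).mpr h2) h
    simp [h, this]

lemma b2_xor (a b : Bool) : b2 (xor a b) = b2 a + b2 b := by cases a <;> cases b <;> decide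

lemma b2_inj {a b : Bool} (h : b2 a = b2 b) : a = b := by
  cases a <;> cases b <;> simp_all <;> exact absurd h (by decide)

lemma b2_not (a : Bool) : b2 (!a) = b2 a + 1 := by cases a <;> decide

lemma zmod2_ne_iff {u v : ZMod 2} : u ≠ v ↔ u = v + 1 := by revert u v; decide

lemma zmod2_add_self (u : ZMod 2) : u + u = 0 := by revert u; decide

/-! ### Basic definitions -/

variable {m n : ℕ}

/-- extension of a vertex of the m-cube to a function on ℕ -/
def xt (x : Fin m → Bool) (t : ℕ) : Bool := if h : t < m then x ⟨t, h⟩ else false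

/-- number of `none`-positions of `f` below `i` -/
def nb (f : Fin n → Option Bool) (i : Fin n) : ℕ :=
  (univ.filter fun j => j < i ∧ f j = none).card

/-- the `some false` positions between the last `none` before `i` and `i` -/
def gapset (f : Fin n → Option Bool) (i : Fin n) : Finset (Fin n) :=
  univ.filter fun j => j < i ∧ f j = some false ∧ ∀ l, j < l → l < i → f l ≠ none

def Fb (f : Fin n → Option Bool) (i : Fin n) : Bool := decide (Odd (gapset f i).card)

/-- the dimension-preserving morphism associated to `f` -/
def Phi (m : ℕ) (f : Fin n → Option Bool) (x : Fin m → Bool) (i : Fin n) : Bool :=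
  (f i).getD (xor (xt x (nb f i)) (Fb f i))

def Cset (y : Fin n → Bool) (i : Fin n) : Finset (Fin n) :=
  univ.filter fun j => j < i ∧ y j = false

def Dset (x : Fin m → Bool) (a : ℕ) : Finset (Fin m) :=
  univ.filter fun t => (t : ℕ) < a ∧ x t = false

def Nset (f : Fin n → Option Bool) (i : Fin n) : Finset (Fin n) :=
  univ.filter fun j => j < i ∧ f j = none

def SFset (f : Fin n → Option Bool) (i : Fin n) : Finset (Fin n) :=
  univ.filter fun j => j < i ∧ f j = some false

def flipv (x : Fin m → Bool) (t : Fin m) : Fin m → Bool := Function.update x t (!x t)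

/-! ### nb lemmas -/

lemma nb_strictMono {f : Fin n → Option Bool} {j₁ j₂ : Fin n} (h12 : j₁ < j₂)
    (h1 : f j₁ = none) : nb f j₁ < nb f j₂ := by
  apply card_lt_card
  constructor
  · intro a ha
    simp only [mem_filter] at *
    exact ⟨ha.1, lt_trans ha.2.1 h12, ha.2.2⟩
  · intro hsub
    have h : j₁ ∈ univ.filter fun j => j < j₂ ∧ f j = none := by simp [h12, h1]
    have := hsub h
    simp at this

lemma nb_injOn {f : Fin n → Option Bool} {j₁ j₂ : Fin n} (h1 : f j₁ = none) (h2 : f j₂ = none)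
    (h : nb f j₁ = nb f j₂) : j₁ = j₂ := by
  by_contra hne
  rcases lt_or_gt_of_ne hne with hl | hl
  · exact absurd h (Nat.ne_of_lt (nb_strictMono hl h1))
  · exact absurd h.symm (Nat.ne_of_lt (nb_strictMono hl h2))

lemma nb_lt_card {f : Fin n → Option Bool} {i : Fin n} (hi : f i = none) :
    nb f i < (univ.filter fun j => f j = none).card := by
  apply card_lt_card
  constructor
  · intro a ha; simp only [mem_filter] at *; exact ⟨ha.1, ha.2.2⟩
  · intro hsub
    have h : i ∈ univ.filter fun j : Fin n => f j = none := by simp [hi]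
    have := hsub h
    simp at this

/-! ### The gap partition identity -/

lemma P_nat {f : Fin n → Option Bool} {i : Fin n} (hi : f i = none) :
    (SFset f i).card = ∑ j ∈ insert i (Nset f i), (gapset f j).card := by
  have hN' : ∀ j ∈ insert i (Nset f i), f j = none ∧ j ≤ i := by
    intro j hj
    rcases mem_insert.mp hj with h | h
    · exact ⟨h ▸ hi, h ▸ le_refl i⟩
    · simp only [Nset, mem_filter] at h
      exact ⟨h.2.2, le_of_lt h.2.1⟩
  rw [← card_biUnion]
  · congr 1
    ext x
    simp only [SFset, mem_filter, mem_biUnion, mem_univ, true_and]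
    constructor
    · rintro ⟨hxi, hxf⟩
      have hne : (univ.filter fun j' => x < j' ∧ f j' = none ∧ j' ≤ i).Nonempty :=
        ⟨i, by simp [hxi, hi]⟩
      set T := univ.filter fun j' : Fin n => x < j' ∧ f j' = none ∧ j' ≤ i with hT
      obtain ⟨hxj, hjn, hji⟩ : x < T.min' hne ∧ f (T.min' hne) = none ∧ T.min' hne ≤ i := by
        have := T.min'_mem hne
        simp only [hT, mem_filter] at this
        exact this.2
      refine ⟨T.min' hne, ?_, ?_⟩
      · rcases lt_or_eq_of_le hji with h | h
        · exact mem_insert_of_mem (by simp [Nset, h, hjn])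
        · rw [h]; exact mem_insert_self _ _
      · simp only [gapset, mem_filter, mem_univ, true_and]
        refine ⟨hxj, hxf, fun l hxl hlj hln => ?_⟩
        have hlT : l ∈ T := by simp [hT, hxl, hln, le_of_lt (lt_of_lt_of_le hlj hji)]
        exact absurd (T.min'_le l hlT) (not_le.mpr hlj)
    · rintro ⟨j, hjN, hxg⟩
      simp only [gapset, mem_filter, mem_univ, true_and] at hxg
      exact ⟨lt_of_lt_of_le hxg.1 (hN' j hjN).2, hxg.2.1⟩
  · intro j₁ h₁ j₂ h₂ hne
    have w : ∀ a b : Fin n, a ∈ insert i (Nset f i) → b ∈ insert i (Nset f i) → a < b →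
        Disjoint (gapset f a) (gapset f b) := by
      intro a b ha hb hab
      rw [disjoint_left]
      intro x hxa hxb
      simp only [gapset, mem_filter, mem_univ, true_and] at hxa hxb
      exact hxb.2.2 a hxa.1 hab (hN' a ha).1
    rcases lt_or_gt_of_ne hne with h | h
    · exact w _ _ h₁ h₂ h
    · exact (w _ _ h₂ h₁ h).symm

/-! ### Rank bijection and range sums -/

lemma nb_image {f : Fin n → Option Bool} (i : Fin n) :
    (Nset f i).image (nb f) = Finset.range (nb f i) := by
  have hinj : Set.InjOn (nb f) (Nset f i) := by
    intro a ha b hb hab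
    simp only [Nset, coe_filter, Set.mem_setOf_eq] at ha hb
    exact nb_injOn ha.2.2 hb.2.2 hab
  apply eq_of_subset_of_card_le
  · intro t ht
    simp only [mem_image] at ht
    obtain ⟨j, hj, rfl⟩ := ht
    simp only [Nset, mem_filter] at hj
    exact mem_range.mpr (nb_strictMono hj.2.1 hj.2.2)
  · rw [card_range, card_image_of_injOn hinj]
    rfl

lemma rank_sum {M : Type*} [AddCommMonoid M] {f : Fin n → Option Bool} (i : Fin n)
    (F : ℕ → M) : ∑ j ∈ Nset f i, F (nb f j) = ∑ t ∈ Finset.range (nb f i), F t := by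
  rw [← nb_image i, sum_image]
  intro a ha b hb hab
  simp only [Nset, mem_coe, coe_filter, mem_filter, Set.mem_setOf_eq] at ha hb
  exact nb_injOn ha.2.2 hb.2.2 hab

lemma range_sum_fin {M : Type*} [AddCommMonoid M] {K : ℕ} (hK : K ≤ m) (G : ℕ → M) :
    ∑ t ∈ Finset.range K, G t =
    ∑ t ∈ univ.filter (fun t : Fin m => (t : ℕ) < K), G (t : ℕ) := by
  rcases Nat.eq_zero_or_pos m with hm | hm
  · have hK0 : K = 0 := by omega
    subst hK0
    simp
  apply Finset.sum_nbij' (fun t : ℕ => (⟨t % m, Nat.mod_lt _ hm⟩ : Fin m))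
    (fun t : Fin m => (t : ℕ))
  · intro a ha
    simp only [mem_range] at ha
    have ham : a < m := lt_of_lt_of_le ha hK
    simp only [mem_filter, mem_univ, true_and]
    simpa [Nat.mod_eq_of_lt ham] using ha
  · intro a ha; simp only [mem_filter] at ha; simp [mem_range, ha.2]
  · intro a ha
    simp only [mem_range] at ha
    have ham : a < m := lt_of_lt_of_le ha hK
    simp [Nat.mod_eq_of_lt ham]
  · intro a ha
    apply Fin.ext
    simp [Nat.mod_eq_of_lt a.isLt]
  · intro a ha
    simp only [mem_range] at ha
    have ham : a < m := lt_of_lt_of_le ha hK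
    congr 1
    simp [Nat.mod_eq_of_lt ham]

/-! ### The parity lemma -/

lemma parity (f : Fin n → Option Bool) (x : Fin m → Bool) {i : Fin n} (hi : f i = none)
    (hK : nb f i ≤ m) :
    ((Cset (Phi m f x) i).card : ZMod 2) = b2 (Fb f i) + ((Dset x (nb f i)).card : ZMod 2) := by
  classical
  set K := nb f i with hKdef
  have hdecomp : Cset (Phi m f x) i =
      SFset f i ∪ (Nset f i).filter (fun j => xor (xt x (nb f j)) (Fb f j) = false) := by
    ext j
    simp only [Cset, SFset, Nset, mem_union, mem_filter, mem_univ, true_and]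
    cases hfj : f j with
    | none => simp [Phi, hfj, and_assoc]
    | some b =>
      cases b <;> simp [Phi, hfj]
  have hdisj : Disjoint (SFset f i)
      ((Nset f i).filter (fun j => xor (xt x (nb f j)) (Fb f j) = false)) := by
    rw [disjoint_left]
    intro a ha hb
    simp only [SFset, Nset, mem_filter, mem_univ, true_and] at ha hb
    rw [ha.2] at hb
    simp at hb
  have hcard : (Cset (Phi m f x) i).card =
      (SFset f i).card +
      ((Nset f i).filter (fun j => xor (xt x (nb f j)) (Fb f j) = false)).card := by
    rw [hdecomp, card_union_of_disjoint hdisj]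
  have h2 : ((((Nset f i).filter (fun j => xor (xt x (nb f j)) (Fb f j) = false)).card : ℕ) :
      ZMod 2) = ∑ j ∈ Nset f i, (1 + b2 (xt x (nb f j)) + b2 (Fb f j)) := by
    rw [Finset.card_filter]
    push_cast
    apply Finset.sum_congr rfl
    intro j _
    rcases Bool.dichotomy (xt x (nb f j)) with h | h <;>
      rcases Bool.dichotomy (Fb f j) with h' | h' <;> simp [h, h'] <;> decide
  have h3 : (((SFset f i).card : ℕ) : ZMod 2) = b2 (Fb f i) + ∑ j ∈ Nset f i, b2 (Fb f j) := by
    rw [P_nat hi]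
    push_cast
    rw [Finset.sum_insert (by simp [Nset])]
    congr 1
    · exact (conv3 _).symm
    · apply Finset.sum_congr rfl
      intro j _
      exact (conv3 _).symm
  have h4 : (((Dset x K).card : ℕ) : ZMod 2) =
      (K : ZMod 2) + ∑ t ∈ Finset.range K, b2 (xt x t) := by
    have hD : Dset x K = (univ.filter (fun t : Fin m => (t : ℕ) < K)).filter
        (fun t => x t = false) := by
      ext t; simp [Dset, and_assoc]
    rw [hD, Finset.card_filter]
    push_cast
    rw [range_sum_fin hK (fun t => b2 (xt x t))]
    have hKval : (K : ZMod 2) = ∑ t ∈ univ.filter (fun t : Fin m => (t : ℕ) < K), 1 := by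
      rw [Finset.sum_const, nsmul_eq_mul, mul_one]
      congr 1
      have := range_sum_fin (m := m) hK (fun _ => (1 : ℕ))
      simpa using this
    rw [hKval, ← Finset.sum_add_distrib]
    apply Finset.sum_congr rfl
    intro t ht
    simp only [mem_filter] at ht
    have hxt : xt x (t : ℕ) = x t := by simp [xt, t.isLt]
    rw [hxt]
    rcases Bool.dichotomy (x t) with h | h <;> simp [h] <;> decide
  have h5 : ∑ j ∈ Nset f i, b2 (xt x (nb f j)) = ∑ t ∈ Finset.range K, b2 (xt x t) := by
    rw [hKdef]
    exact rank_sum (f := f) i (fun t => b2 (xt x t))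
  have hNcard : ((Nset f i).card : ZMod 2) = (K : ZMod 2) := rfl
  rw [hcard]
  push_cast
  rw [h3]
  rw [h2, Finset.sum_add_distrib, Finset.sum_add_distrib, Finset.sum_const, nsmul_eq_mul, mul_one,
    hNcard, h5, h4]
  ring_nf
  rw [show ((2:ZMod 2)) = 0 by decide]
  ring

/-! ### Phi is a dimension-preserving graph morphism -/

lemma xt_lt (x : Fin m → Bool) {t : ℕ} (h : t < m) : xt x t = x ⟨t, h⟩ := dif_pos h

lemma xt_agree {x y : Fin m → Bool} {i₀ : Fin m} (hoff : ∀ j, j ≠ i₀ → x j = y j) {a : ℕ}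
    (ha : a ≠ (i₀ : ℕ)) : xt x a = xt y a := by
  unfold xt
  split
  · next h => exact hoff ⟨a, h⟩ (fun hc => ha (congrArg Fin.val hc))
  · rfl

lemma Phi_some {f : Fin n → Option Bool} {i : Fin n} {b : Bool} (h : f i = some b)
    (x : Fin m → Bool) : Phi m f x i = b := by simp [Phi, h]

lemma Phi_none {f : Fin n → Option Bool} {i : Fin n} (h : f i = none) (x : Fin m → Bool) :
    Phi m f x i = xor (xt x (nb f i)) (Fb f i) := by simp [Phi, h]

lemma Dset_eq (x : Fin m → Bool) (i : Fin m) :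
    univ.filter (fun l : Fin m => l < i ∧ x l = false) = Dset x (i : ℕ) := by
  apply filter_congr
  intro l _
  exact Iff.rfl

lemma Phi_eq_of_agree {f : Fin n → Option Bool} {x y : Fin m → Bool} {i₀ : Fin m}
    (hoff : ∀ j, j ≠ i₀ → x j = y j)
    (hno : ∀ j : Fin n, f j = none → nb f j ≠ (i₀ : ℕ)) : Phi m f x = Phi m f y := by
  funext j
  cases hfj : f j with
  | some b => rw [Phi_some hfj, Phi_some hfj]
  | none =>
    rw [Phi_none hfj, Phi_none hfj, xt_agree hoff (hno j hfj)]

lemma Phi_flips {f : Fin n → Option Bool} {x y : Fin m → Bool} {i₀ : Fin m}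
    (hx : x i₀ ≠ y i₀) (hoff : ∀ j, j ≠ i₀ → x j = y j)
    {j : Fin n} (hjn : f j = none) (hjk : nb f j = (i₀ : ℕ)) :
    Flips (Phi m f x) (Phi m f y) j := by
  have hxt : xt x (nb f j) = x i₀ := by rw [hjk, xt_lt x i₀.isLt]
  have hyt : xt y (nb f j) = y i₀ := by rw [hjk, xt_lt y i₀.isLt]
  constructor
  · rw [Phi_none hjn, Phi_none hjn, hxt, hyt]
    intro hc
    apply hx
    rcases Bool.dichotomy (Fb f j) with h | h <;> rw [h] at hc <;>
      simpa using hc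
  · intro j' hj'
    cases hfj' : f j' with
    | some b => rw [Phi_some hfj', Phi_some hfj']
    | none =>
      rw [Phi_none hfj', Phi_none hfj']
      have : nb f j' ≠ (i₀ : ℕ) := by
        rw [← hjk]
        intro hc
        exact hj' (nb_injOn hfj' hjn hc)
      rw [xt_agree hoff this]

lemma Phi_hom (f : Fin n → Option Bool) : IsGraphHom (TwE m) (TwE n) (Phi m f) := by
  intro x y h
  rcases h with rfl | ⟨i₀, hoff, hflip, hdir⟩
  · exact Or.inl rfl
  by_cases hej : ∃ j : Fin n, f j = none ∧ nb f j = (i₀ : ℕ)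
  · obtain ⟨j, hjn, hjk⟩ := hej
    have hxy : x i₀ ≠ y i₀ := by rw [hflip]; simp
    have hfl := Phi_flips hxy hoff hjn hjk
    refine Or.inr ⟨j, hfl.2, ?_, ?_⟩
    · rw [Phi_none hjn, Phi_none hjn, hjk, xt_lt x i₀.isLt, xt_lt y i₀.isLt]
      show xor (y i₀) (Fb f j) = !(xor (x i₀) (Fb f j))
      rw [hflip]
      rcases Bool.dichotomy (x i₀) with h | h <;> rcases Bool.dichotomy (Fb f j) with h' | h' <;>
        rw [h, h'] <;> rfl
    · rw [conv1]
      have hC : (univ.filter fun j' : Fin n => j' < j ∧ Phi m f x j' = false) =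
          Cset (Phi m f x) j := rfl
      rw [hC, parity f x hjn (by rw [hjk]; exact le_of_lt i₀.isLt)]
      rw [conv1] at hdir
      rw [Dset_eq] at hdir
      rw [Phi_none hjn, b2_xor, hjk, xt_lt x i₀.isLt]
      show b2 (x i₀) + b2 (Fb f j) = _
      rw [hdir]
      ring
  · push_neg at hej
    exact Or.inl (Phi_eq_of_agree hoff hej)

lemma Phi_dimPres (f : Fin n → Option Bool) : DimPres (Phi m f) := by
  intro x₁ y₁ x₂ y₂ i₀ h₁ h₂
  by_cases hej : ∃ j : Fin n, f j = none ∧ nb f j = (i₀ : ℕ)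
  · obtain ⟨j, hjn, hjk⟩ := hej
    exact Or.inr ⟨j, Phi_flips h₁.1 h₁.2 hjn hjk, Phi_flips h₂.1 h₂.2 hjn hjk⟩
  · push_neg at hej
    exact Or.inl ⟨Phi_eq_of_agree h₁.2 hej, Phi_eq_of_agree h₂.2 hej⟩

lemma Phi_inj {f₁ f₂ : Fin n → Option Bool}
    (h₁ : (univ.filter fun i => f₁ i = none).card ≤ m)
    (h₂ : (univ.filter fun i => f₂ i = none).card ≤ m)
    (h : Phi m f₁ = Phi m f₂) : f₁ = f₂ := by
  classical
  have key : ∀ (f g : Fin n → Option Bool), (univ.filter fun i => f i = none).card ≤ m →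
      Phi m f = Phi m g → ∀ i b, f i = none → g i = some b → False := by
    intro f g hf hfg i b hfi hgi
    have hK : nb f i < m := lt_of_lt_of_le (nb_lt_card hfi) hf
    set x₀ : Fin m → Bool := fun _ => false with hx₀
    set x₁ : Fin m → Bool := Function.update x₀ ⟨nb f i, hK⟩ true with hx₁
    have e₀ : Phi m f x₀ i = Phi m g x₀ i := by rw [hfg]
    have e₁ : Phi m f x₁ i = Phi m g x₁ i := by rw [hfg]
    rw [Phi_some hgi] at e₀ e₁
    rw [Phi_none hfi] at e₀ e₁
    have hxt₀ : xt x₀ (nb f i) = false := by rw [xt_lt x₀ hK]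
    have hxt₁ : xt x₁ (nb f i) = true := by rw [xt_lt x₁ hK]; simp [hx₁]
    rw [hxt₀] at e₀
    rw [hxt₁] at e₁
    rw [← e₁] at e₀
    rcases Bool.dichotomy (Fb f i) with hb | hb <;> rw [hb] at e₀ <;> simp at e₀
  funext i
  cases h1 : f₁ i with
  | none =>
    cases h2 : f₂ i with
    | none => rfl
    | some b => exact absurd (key f₁ f₂ h₁ h i b h1 h2) not_false
  | some b =>
    cases h2 : f₂ i with
    | none => exact absurd (key f₂ f₁ h₂ h.symm i b h2 h1) not_false
    | some b' =>
      have : Phi m f₁ (fun _ => false) i = Phi m f₂ (fun _ => false) i := by rw [h]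
      rw [Phi_some h1, Phi_some h2] at this
      rw [this]

/-! ### Structure of dimension-preserving morphisms -/

lemma flips_flipv (x : Fin m → Bool) (t : Fin m) : Flips x (flipv x t) t := by
  constructor
  · simp [flipv]
  · intro j hj; simp [flipv, Function.update_of_ne hj]

lemma flips_unique {x y : Fin n → Bool} {j j' : Fin n} (h : Flips x y j) (h' : Flips x y j') :
    j = j' := by
  by_contra hne
  exact h.1 (h'.2 j (Ne.symm (fun hc => hne hc.symm)))

lemma flipv_noteq {x : Fin m → Bool} {t s : Fin m} (h : s ≠ t) : flipv x t s = x s :=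
  Function.update_of_ne h _ _

lemma flipv_self (x : Fin m → Bool) (t : Fin m) : flipv x t t = !x t := by simp [flipv]

lemma Dset_flip_of_ge {x : Fin m → Bool} {t : Fin m} {a : ℕ} (h : a ≤ (t : ℕ)) :
    Dset (flipv x t) a = Dset x a := by
  apply filter_congr
  intro s _
  constructor
  · rintro ⟨hs, hv⟩
    refine ⟨hs, ?_⟩
    rwa [flipv_noteq (fun hc => absurd (hc ▸ hs) (by omega))] at hv
  · rintro ⟨hs, hv⟩
    refine ⟨hs, ?_⟩
    rwa [flipv_noteq (fun hc => absurd (hc ▸ hs) (by omega))]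

lemma Dset_flip_of_lt {x : Fin m → Bool} {t : Fin m} {a : ℕ} (h : (t : ℕ) < a) :
    (((Dset (flipv x t) a).card : ℕ) : ZMod 2) = ((Dset x a).card : ZMod 2) + 1 := by
  classical
  by_cases hx : x t = false
  · have hmem : t ∈ Dset x a := by simp [Dset, h, hx]
    have hset : Dset (flipv x t) a = (Dset x a).erase t := by
      ext s
      simp only [Dset, mem_filter, mem_univ, true_and, mem_erase]
      by_cases hs : s = t
      · subst hs
        simp [flipv_self, hx]
      · rw [flipv_noteq hs]
        simp [hs]
    rw [hset, card_erase_of_mem hmem]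
    have hpos : 1 ≤ (Dset x a).card := card_pos.mpr ⟨t, hmem⟩
    rw [Nat.cast_sub hpos]
    have : ∀ u : ZMod 2, u - 1 = u + 1 := by decide
    exact this _
  · have hxt : x t = true := by
      rcases Bool.dichotomy (x t) with h' | h'
      · exact absurd h' hx
      · exact h'
    have hmem : t ∉ Dset x a := by simp [Dset, hxt]
    have hset : Dset (flipv x t) a = insert t (Dset x a) := by
      ext s
      simp only [Dset, mem_filter, mem_univ, true_and, mem_insert]
      by_cases hs : s = t
      · subst hs
        simp [flipv_self, hxt, h]
      · rw [flipv_noteq hs]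
        simp [hs]
    rw [hset, card_insert_of_notMem hmem]
    push_cast
    ring

section G
variable {g : (Fin m → Bool) → (Fin n → Bool)}

lemma dich (hd : DimPres g) (t : Fin m) :
    (∀ x, g x = g (flipv x t)) ∨ ∃ j, ∀ x, Flips (g x) (g (flipv x t)) j := by
  by_cases hc : ∀ x, g x = g (flipv x t)
  · exact Or.inl hc
  push_neg at hc
  obtain ⟨x₀, hx₀⟩ := hc
  rcases hd x₀ (flipv x₀ t) x₀ (flipv x₀ t) t (flips_flipv x₀ t) (flips_flipv x₀ t) with
    h | ⟨j, hj, _⟩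
  · exact absurd h.1 hx₀
  refine Or.inr ⟨j, fun x => ?_⟩
  rcases hd x₀ (flipv x₀ t) x (flipv x t) t (flips_flipv x₀ t) (flips_flipv x t) with
    h | ⟨j', hj₀', hj'⟩
  · exact absurd h.1 hx₀
  · rwa [flips_unique hj₀' hj] at hj'

lemma ham (i : Fin n) (hloc : ∀ (t : Fin m) (x), g x i = g (flipv x t) i) :
    ∀ x y, g x i = g y i := by
  classical
  have key : ∀ d (x y : Fin m → Bool), (univ.filter fun t => x t ≠ y t).card = d →
      g x i = g y i := by
    intro d
    induction d using Nat.strong_induction_on with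
    | _ d IH =>
      intro x y hcard
      rcases Nat.eq_zero_or_pos d with rfl | hpos
      · have : ∀ t, x t = y t := by
          intro t
          by_contra hne
          have ht : t ∈ univ.filter fun t => x t ≠ y t := by simp [hne]
          rw [card_eq_zero] at hcard
          simp [hcard] at ht
        rw [funext this]
      · have hne : (univ.filter fun t => x t ≠ y t).Nonempty := by
          rw [← card_pos, hcard]; exact hpos
        obtain ⟨t, ht⟩ := hne
        simp only [mem_filter, mem_univ, true_and] at ht
        have hyt : flipv y t = Function.update y t (x t) := by
          unfold flipv
          rcases Bool.dichotomy (x t) with h | h <;> rcases Bool.dichotomy (y t) with h' | h' <;>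
            simp_all
        have hstep : g y i = g (Function.update y t (x t)) i := by
          rw [← hyt]; exact hloc t y
        have hcard' : (univ.filter fun s => x s ≠ Function.update y t (x t) s).card = d - 1 := by
          have hset : (univ.filter fun s => x s ≠ Function.update y t (x t) s) =
              (univ.filter fun s => x s ≠ y s).erase t := by
            ext s
            simp only [mem_filter, mem_univ, true_and, mem_erase]
            by_cases hs : s = t
            · subst hs; simp
            · simp [Function.update_of_ne hs, hs]
          rw [hset, card_erase_of_mem (by simp [ht]), hcard]
        have := IH (d-1) (by omega) x (Function.update y t (x t)) hcard'
        rw [this, ← hstep]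
  intro x y
  exact key _ x y rfl

open Classical in
noncomputable def extract (g : (Fin m → Bool) → (Fin n → Bool)) : Fin n → Option Bool :=
  fun i => if ∀ x y, g x i = g y i then some (g (fun _ => false) i) else none

lemma extract_some {i : Fin n} {b : Bool} (h : extract g i = some b) : ∀ x, g x i = b := by
  unfold extract at h
  split at h
  · next hc => intro x; rw [hc x (fun _ => false), Option.some_inj.mp h]
  · simp at h

lemma extract_exists (hd : DimPres g) {i : Fin n} (h : extract g i = none) :
    ∃ t : Fin m, ∀ x, Flips (g x) (g (flipv x t)) i := by
  unfold extract at h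
  split at h
  · simp at h
  next hc =>
    have hnl : ¬ ∀ (t : Fin m) (x), g x i = g (flipv x t) i := fun hl => hc (ham i hl)
    push_neg at hnl
    obtain ⟨t, x₀, hx₀⟩ := hnl
    rcases dich hd t with hcol | ⟨j, hj⟩
    · exact absurd (congrFun (hcol x₀) i) hx₀
    · refine ⟨t, ?_⟩
      have hji : j = i := by
        by_contra hne
        exact hx₀ ((hj x₀).2 i (Ne.symm hne))
      rwa [hji] at hj

lemma extract_card (hd : DimPres g) : (univ.filter fun i => extract g i = none).card ≤ m := by
  classical
  have hmap : ∀ i ∈ univ.filter (fun i => extract g i = none),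
      ∃ t : Fin m, ∀ x, Flips (g x) (g (flipv x t)) i := by
    intro i hi
    simp only [mem_filter, mem_univ, true_and] at hi
    exact extract_exists hd hi
  choose ψ hψ using hmap
  have hinj : ∀ i₁ h₁ i₂ h₂, ψ i₁ h₁ = ψ i₂ h₂ → i₁ = i₂ := by
    intro i₁ h₁ i₂ h₂ he
    have f₁ := hψ i₁ h₁ (fun _ => false)
    have f₂ := hψ i₂ h₂ (fun _ => false)
    rw [he] at f₁
    exact flips_unique f₁ f₂
  calc (univ.filter fun i => extract g i = none).card
      = ((univ.filter fun i => extract g i = none).attach.image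
          (fun i => ψ i.1 i.2)).card := by
        rw [card_image_of_injective _ (fun a b hab => Subtype.ext (hinj _ _ _ _ hab)),
          card_attach]
    _ ≤ m := le_trans (card_le_card (subset_univ _)) (by simp)

lemma master (hg : IsGraphHom (TwE m) (TwE n) g) {t : Fin m} {j : Fin n}
    (H : ∀ x, Flips (g x) (g (flipv x t)) j) (x : Fin m → Bool) :
    b2 (g x j) + ((Cset (g x) j).card : ZMod 2) =
    b2 (x t) + ((Dset x (t : ℕ)).card : ZMod 2) := by
  classical
  set y := flipv x t with hy
  have hyt : y t = !x t := by simp [hy, flipv]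
  have hyoff : ∀ j'', j'' ≠ t → x j'' = y j'' := (flips_flipv x t).2
  have hgne : g x j ≠ g y j := (H x).1
  have hgoff : ∀ j'', j'' ≠ j → g x j'' = g y j'' := (H x).2
  by_cases hP : x t = true ↔ Odd ((univ.filter fun l : Fin m => l < t ∧ x l = false)).card
  · have hedge : TwE m x y := Or.inr ⟨t, hyoff, hyt, hP⟩
    rcases hg x y hedge with heq | ⟨i, hioff, _, hidir⟩
    · exact absurd (congrFun heq j) hgne
    · have hij : i = j := by
        by_contra hne
        exact hgne (hioff j (fun hc => hne hc.symm))
      subst hij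
      have h1 : b2 (g x i) = ((Cset (g x) i).card : ZMod 2) := (conv1 _ _).mp hidir
      have h2 : b2 (x t) = ((Dset x (t : ℕ)).card : ZMod 2) := by
        rw [← Dset_eq x t]; exact (conv1 _ _).mp hP
      rw [h1, h2, zmod2_add_self, zmod2_add_self]
  · have hxt' : x t = !(y t) := by rw [hyt]; simp
    have hyP : y t = true ↔ Odd ((univ.filter fun l : Fin m => l < t ∧ y l = false)).card := by
      have hsets : (univ.filter fun l : Fin m => l < t ∧ y l = false) =
          (univ.filter fun l : Fin m => l < t ∧ x l = false) := by
        apply filter_congr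
        intro l _
        constructor
        · rintro ⟨hl, hv⟩
          exact ⟨hl, by rw [hyoff l (ne_of_lt hl)]; exact hv⟩
        · rintro ⟨hl, hv⟩
          exact ⟨hl, by rw [← hyoff l (ne_of_lt hl)]; exact hv⟩
      rw [hsets, hyt]
      by_cases hO : Odd ((univ.filter fun l : Fin m => l < t ∧ x l = false)).card
      · have hxf : x t = false := by
          rcases Bool.dichotomy (x t) with h | h
          · exact h
          · exact absurd (iff_of_true h hO) hP
        rw [hxf]
        simpa using hO
      · have hxt2 : x t = true := by
          rcases Bool.dichotomy (x t) with h | h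
          · exact absurd (iff_of_false (by simp [h]) hO) hP
          · exact h
        rw [hxt2]
        simp [hO]
    have hedge : TwE m y x := Or.inr ⟨t, fun j'' h => (hyoff j'' h).symm, hxt', hyP⟩
    rcases hg y x hedge with heq | ⟨i, hioff, _, hidir⟩
    · exact absurd (congrFun heq j).symm hgne
    · have hij : i = j := by
        by_contra hne
        exact hgne (hioff j (fun hc => hne hc.symm)).symm
      subst hij
      have hCeq : Cset (g y) i = Cset (g x) i := by
        apply filter_congr
        intro l _
        constructor
        · rintro ⟨hl, hv⟩
          exact ⟨hl, by rw [hgoff l (ne_of_lt hl)]; exact hv⟩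
        · rintro ⟨hl, hv⟩
          exact ⟨hl, by rw [← hgoff l (ne_of_lt hl)]; exact hv⟩
      have h1 : b2 (g y i) = ((Cset (g x) i).card : ZMod 2) := by
        rw [← hCeq]; exact (conv1 _ _).mp hidir
      have e1 : b2 (g x i) = ((Cset (g x) i).card : ZMod 2) + 1 := by
        rw [← h1]
        exact zmod2_ne_iff.mp (fun h => hgne (b2_inj h))
      have h2 : b2 (x t) = ((Dset x (t : ℕ)).card : ZMod 2) + 1 := by
        apply zmod2_ne_iff.mp
        intro h
        apply hP
        rw [conv1, Dset_eq]
        exact h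
      rw [e1, h2]
      have lem : ∀ u v : ZMod 2, (u + 1) + u = (v + 1) + v := by decide
      exact lem _ _

theorem main (hg : IsGraphHom (TwE m) (TwE n) g) (hd : DimPres g) :
    ∀ (j : Fin n) (x : Fin m → Bool), g x j = Phi m (extract g) x j := by
  classical
  set f := extract g with hf
  have key : ∀ (jv : ℕ) (j : Fin n), (j : ℕ) = jv → ∀ x, g x j = Phi m f x j := by
    intro jv
    induction jv using Nat.strong_induction_on with
    | _ jv IH =>
      intro j hj x
      cases hfj : f j with
      | some b =>
        rw [Phi_some hfj]
        exact extract_some (hf ▸ hfj) x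
      | none =>
        obtain ⟨l, Hl⟩ := extract_exists hd (hf ▸ hfj)
        have IH' : ∀ (x : Fin m → Bool) (j' : Fin n), j' < j → g x j' = Phi m f x j' :=
          fun x j' hj' => IH (j' : ℕ) (hj ▸ hj') j' rfl x
        have hCeq : ∀ x : Fin m → Bool, Cset (g x) j = Cset (Phi m f x) j := by
          intro x
          apply filter_congr
          intro l' _
          constructor
          · rintro ⟨hl', hv⟩
            exact ⟨hl', by rw [← IH' x l' hl']; exact hv⟩
          · rintro ⟨hl', hv⟩
            exact ⟨hl', by rw [IH' x l' hl']; exact hv⟩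
        have hK : nb f j < m := lt_of_lt_of_le (nb_lt_card hfj) (hf ▸ extract_card hd)
        have key8 : ∀ (t : Fin m), (∀ x, Flips (g x) (g (flipv x t)) j) → ∀ x : Fin m → Bool,
            b2 (g x j) = b2 (x t) + ((Dset x (t : ℕ)).card : ZMod 2) +
              ((Dset x (nb f j)).card : ZMod 2) + b2 (Fb f j) := by
          intro t Ht x
          have hm := master hg Ht x
          rw [hCeq x, parity f x hfj (le_of_lt hK)] at hm
          linear_combination hm - zmod2_add_self (b2 (Fb f j)) -
            zmod2_add_self (((Dset x (nb f j)).card : ZMod 2))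
        have final : ∀ (t : Fin m), (t : ℕ) = nb f j → (∀ x, Flips (g x) (g (flipv x t)) j) →
            g x j = Phi m f x j := by
          intro t ht Ht
          have h8 := key8 t Ht x
          rw [ht] at h8
          have hb : b2 (g x j) = b2 (xor (x t) (Fb f j)) := by
            rw [b2_xor]
            linear_combination h8 + zmod2_add_self (((Dset x (nb f j)).card : ZMod 2))
          have htt : t = ⟨nb f j, hK⟩ := Fin.ext ht
          rw [b2_inj hb, Phi_none hfj, xt_lt x hK, htt]
        rcases lt_trichotomy (l : ℕ) (nb f j) with hlt | heq | hgt
        · exfalso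
          have h1 := key8 l Hl x
          have h2 := key8 l Hl (flipv x l)
          rw [flipv_self, Dset_flip_of_ge (le_refl _), Dset_flip_of_lt hlt, b2_not] at h2
          have heq2 : b2 (g (flipv x l) j) = b2 (g x j) := by
            linear_combination h2 - h1 + zmod2_add_self 1
          exact (Hl x).1 (b2_inj heq2).symm
        · exact final l heq Hl
        · exfalso
          set t₀ : Fin m := ⟨nb f j, hK⟩ with ht₀def
          have hval : (t₀ : ℕ) = nb f j := rfl
          have hlt₀ : l ≠ t₀ := by
            intro hc
            rw [hc] at hgt
            exact absurd hval (Nat.ne_of_gt hgt)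
          have hne : ∀ z : Fin m → Bool, g z j ≠ g (flipv z t₀) j := by
            intro z
            have h1 := key8 l Hl z
            have h2 := key8 l Hl (flipv z t₀)
            rw [flipv_noteq hlt₀] at h2
            have e1 : (((Dset (flipv z t₀) (l : ℕ)).card : ℕ) : ZMod 2) =
                ((Dset z (l : ℕ)).card : ZMod 2) + 1 := by
              apply Dset_flip_of_lt
              rw [hval]
              exact hgt
            have e2 : Dset (flipv z t₀) (nb f j) = Dset z (nb f j) :=
              Dset_flip_of_ge (le_of_eq hval.symm)
            rw [e1, e2] at h2
            intro hc
            have hcc : b2 (g z j) = b2 (g (flipv z t₀) j) := congrArg b2 hc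
            rw [h1, h2] at hcc
            have : (1 : ZMod 2) = 0 := by linear_combination hcc + zmod2_add_self 1
            exact absurd this (by decide)
          have Ht₀ : ∀ z, Flips (g z) (g (flipv z t₀)) j := by
            rcases dich hd t₀ with hcol | ⟨j', hj'⟩
            · exact absurd (congrFun (hcol x) j) (hne x)
            · have hjj : j' = j := by
                by_contra hc
                exact hne x ((hj' x).2 j (fun hcc => hc hcc.symm))
              rw [← hjj]
              exact hj'
          have hform : ∀ z : Fin m → Bool, b2 (g z j) = b2 (z t₀) + b2 (Fb f j) := by
            intro z
            have h8 := key8 t₀ Ht₀ z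
            rw [hval] at h8
            linear_combination h8 + zmod2_add_self (((Dset z (nb f j)).card : ZMod 2))
          have hx2 := hform (flipv x l)
          rw [flipv_noteq (fun hc => hlt₀ hc.symm)] at hx2
          rw [← hform x] at hx2
          exact (Hl x).1 (b2_inj hx2.symm)
  intro j x
  exact key (j : ℕ) j rfl x

end G
end S13

theorem stmt13 (m n : ℕ) :
    Nonempty
      ({g : (Fin m → Bool) → (Fin n → Bool) //
          IsGraphHom (TwE m) (TwE n) g ∧ DimPres g} ≃
       {f : Fin n → Option Bool //
          (Finset.univ.filter (fun i => f i = none)).card ≤ m}) := by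
  classical
  let Ψ : {f : Fin n → Option Bool //
          (Finset.univ.filter (fun i => f i = none)).card ≤ m} →
      {g : (Fin m → Bool) → (Fin n → Bool) //
          IsGraphHom (TwE m) (TwE n) g ∧ DimPres g} :=
    fun f => ⟨S13.Phi m f.1, S13.Phi_hom f.1, S13.Phi_dimPres f.1⟩
  have hinj : Function.Injective Ψ := by
    intro f₁ f₂ h
    exact Subtype.ext (S13.Phi_inj f₁.2 f₂.2 (congrArg Subtype.val h))
  have hsurj : Function.Surjective Ψ := by
    rintro ⟨g, hg, hd⟩
    refine ⟨⟨S13.extract g, S13.extract_card hd⟩, Subtype.ext ?_⟩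
    funext x j
    exact (S13.main hg hd j x).symm
  exact ⟨(Equiv.ofBijective Ψ ⟨hinj, hsurj⟩).symm⟩
end

section
/- A graph morphism g from the twisted m-cube to the twisted n-cube is dimension-preserving if and only if all non-empty fibres of g have the same cardinality, i.e., there exists a natural number c such that for every vertex y in the range of g, the preimage g⁻¹ {y} has exactly c elements. -/
namespace Tw14

variable {m n : ℕ}

def flip (x : Fin m → Bool) (i : Fin m) : Fin m → Bool := fun j => if j = i then !(x j) else x j

def cnt (x : Fin m → Bool) (k : ℕ) : ℕ :=
  (Finset.univ.filter (fun j : Fin m => (j : ℕ) < k ∧ x j = false)).card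

def cond (x : Fin m → Bool) (i : Fin m) : Prop := (x i = true ↔ Odd (cnt x (i : ℕ)))

@[simp] lemma flip_self (x : Fin m → Bool) (i : Fin m) : flip x i i = !(x i) := by
  simp [flip]

lemma flip_ne (x : Fin m → Bool) {i j : Fin m} (h : j ≠ i) : flip x i j = x j := by
  simp [flip, h]

@[simp] lemma flip_flip (x : Fin m → Bool) (i : Fin m) : flip (flip x i) i = x := by
  funext j; by_cases h : j = i <;> simp [flip, h]

lemma flip_comm (x : Fin m → Bool) {i k : Fin m} (h : i ≠ k) :
    flip (flip x k) i = flip (flip x i) k := by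
  funext j
  by_cases hj : j = i <;> by_cases hk : j = k
  · exact absurd (hj ▸ hk) h
  · simp [flip, hj, hk, h, Ne.symm h]
  · simp [flip, hj, hk, h, Ne.symm h]
  · simp [flip, hj, hk]

lemma cnt_congr {x y : Fin m → Bool} {k : ℕ} (h : ∀ j : Fin m, (j : ℕ) < k → x j = y j) :
    cnt x k = cnt y k := by
  unfold cnt
  congr 1
  apply Finset.filter_congr
  intro j _
  by_cases hj : (j : ℕ) < k
  · simp [hj, h j hj]
  · simp [hj]

lemma cnt_zero (x : Fin m → Bool) : cnt x 0 = 0 := by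
  unfold cnt
  simp

lemma cnt_flip_le {x : Fin m → Bool} {i : Fin m} {k : ℕ} (h : k ≤ (i : ℕ)) :
    cnt (flip x i) k = cnt x k := by
  apply cnt_congr
  intro j hj
  apply flip_ne
  intro hji
  subst hji
  omega

lemma cnt_split (x : Fin m → Bool) (i : Fin m) {k : ℕ} (h : (i : ℕ) < k) :
    cnt x k = (Finset.univ.filter (fun j : Fin m => j ≠ i ∧ (j : ℕ) < k ∧ x j = false)).card
      + (if x i = false then 1 else 0) := by
  by_cases hx : x i = false
  · rw [if_pos hx]
    have hins : (Finset.univ.filter (fun j : Fin m => (j : ℕ) < k ∧ x j = false))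
        = insert i (Finset.univ.filter (fun j : Fin m => j ≠ i ∧ (j : ℕ) < k ∧ x j = false)) := by
      ext j
      simp only [Finset.mem_filter, Finset.mem_univ, true_and, Finset.mem_insert]
      constructor
      · rintro ⟨h1, h2⟩
        by_cases hji : j = i
        · exact Or.inl hji
        · exact Or.inr ⟨hji, h1, h2⟩
      · rintro (rfl | ⟨_, h1, h2⟩)
        · exact ⟨h, hx⟩
        · exact ⟨h1, h2⟩
    rw [cnt, hins, Finset.card_insert_of_notMem (by simp)]
  · rw [if_neg hx, add_zero]
    unfold cnt
    congr 1
    apply Finset.filter_congr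
    intro j _
    by_cases hji : j = i
    · subst hji; simp [hx]
    · simp [hji]

lemma cnt_flip_gt {x : Fin m → Bool} {i : Fin m} {k : ℕ} (h : (i : ℕ) < k) :
    Even (cnt (flip x i) k) ↔ ¬ Even (cnt x k) := by
  have h1 := cnt_split (flip x i) i h
  have h2 := cnt_split x i h
  have hfil : (Finset.univ.filter (fun j : Fin m => j ≠ i ∧ (j : ℕ) < k ∧ flip x i j = false))
      = (Finset.univ.filter (fun j : Fin m => j ≠ i ∧ (j : ℕ) < k ∧ x j = false)) := by
    apply Finset.filter_congr
    intro j _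
    by_cases hji : j = i
    · simp [hji]
    · simp [hji, flip_ne x hji]
  rw [hfil] at h1
  rw [flip_self] at h1
  cases hxi : x i <;> simp [hxi] at h1 h2 <;> rw [h1, h2] <;>
    simp [Nat.even_add_one]

lemma cnt_succ (x : Fin m → Bool) (i : Fin m) :
    cnt x ((i : ℕ) + 1) = cnt x (i : ℕ) + (if x i = false then 1 else 0) := by
  rw [cnt_split x i (Nat.lt_succ_self _)]
  congr 1
  unfold cnt
  apply Finset.card_bij (fun a _ => a) <;> intro a ha <;>
    simp only [Finset.mem_filter, Finset.mem_univ, true_and] at *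
  · obtain ⟨h1, h2, h3⟩ := ha
    have : (a : ℕ) ≠ (i : ℕ) := fun hv => h1 (Fin.ext hv)
    exact ⟨by omega, h3⟩
  · exact fun b hb h => h
  · obtain ⟨h1, h2⟩ := ha
    refine ⟨a, ⟨?_, by omega, h2⟩, rfl⟩
    intro he
    subst he
    omega

lemma cond_iff_odd (x : Fin m → Bool) (i : Fin m) :
    cond x i ↔ Odd (cnt x ((i : ℕ) + 1)) := by
  rw [cond, cnt_succ]
  cases hxi : x i <;> simp [hxi, Nat.odd_add_one, Nat.odd_iff, Nat.even_iff] <;> omega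

lemma twE_iff {x y : Fin m → Bool} :
    TwE m x y ↔ x = y ∨ ∃ i, y = flip x i ∧ cond x i := by
  have hcard : ∀ i : Fin m,
      (Finset.univ.filter (fun j : Fin m => j < i ∧ x j = false)).card = cnt x (i : ℕ) := by
    intro i
    unfold cnt
    congr 1
  constructor
  · rintro (rfl | ⟨i, h1, h2, h3⟩)
    · exact Or.inl rfl
    · refine Or.inr ⟨i, ?_, ?_⟩
      · funext j
        by_cases hj : j = i
        · subst hj; rw [h2, flip_self]
        · rw [flip_ne x hj, h1 j hj]
      · rw [cond, ← hcard]; exact h3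
  · rintro (rfl | ⟨i, rfl, h3⟩)
    · exact Or.inl rfl
    · refine Or.inr ⟨i, fun j hj => (flip_ne x hj).symm, flip_self x i, ?_⟩
      rw [hcard]; exact h3

lemma cond_of_not_cond {x : Fin m → Bool} {i : Fin m} (h : ¬ cond x i) : cond (flip x i) i := by
  have hc : cnt (flip x i) (i : ℕ) = cnt x (i : ℕ) := cnt_flip_le le_rfl
  rw [cond, flip_self, hc]
  rw [cond] at h
  cases hxi : x i <;> simp [hxi] at h ⊢ <;> tauto

lemma not_cond_of_cond {x : Fin m → Bool} {i : Fin m} (h : cond x i) : ¬ cond (flip x i) i := by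
  have hc : cnt (flip x i) (i : ℕ) = cnt x (i : ℕ) := cnt_flip_le le_rfl
  rw [cond, flip_self, hc]
  rw [cond] at h
  cases hxi : x i <;> simp [hxi] at h ⊢ <;> tauto

lemma edge_total (x : Fin m → Bool) (i : Fin m) :
    TwE m x (flip x i) ∨ TwE m (flip x i) x := by
  by_cases h : cond x i
  · exact Or.inl (twE_iff.mpr (Or.inr ⟨i, rfl, h⟩))
  · right
    apply twE_iff.mpr
    exact Or.inr ⟨i, by rw [flip_flip], cond_of_not_cond h⟩

lemma twE_anti {u v : Fin m → Bool} (h1 : TwE m u v) (h2 : TwE m v u) : u = v := by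
  rcases twE_iff.mp h1 with rfl | ⟨i, rfl, hc⟩
  · rfl
  rcases twE_iff.mp h2 with he | ⟨i', he, hc'⟩
  · exact he.symm
  · exfalso
    have hii : i' = i := by
      by_contra hne
      have := congrFun he i
      rw [flip_ne _ (fun hh : (i : Fin m) = i' => hne hh.symm), flip_self] at this
      exact absurd this.symm (Bool.not_ne_self (u i))
    subst hii
    rw [flip_flip] at he
    exact not_cond_of_cond hc hc'

lemma flips_eq_flip {x y : Fin m → Bool} {i : Fin m} (h : Flips x y i) : y = flip x i := by
  funext j
  by_cases hj : j = i
  · subst hj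
    rw [flip_self]
    cases hxy : x j <;> cases hy : y j <;> simp_all [Flips]
  · rw [flip_ne x hj, h.2 j hj]

lemma flips_flip (x : Fin m → Bool) (i : Fin m) : Flips x (flip x i) i := by
  refine ⟨?_, fun j hj => (flip_ne x hj).symm⟩
  rw [flip_self]
  simp

lemma testBit_div_pow (N k i : ℕ) : (N / 2^k).testBit i = N.testBit (i + k) := by
  simp [Nat.testBit_eq_decide_div_mod_eq, Nat.div_div_eq_div_mul, ← pow_add, add_comm i k]

lemma sum_pow_lt (M : ℕ) (p : ℕ → Prop) [DecidablePred p] :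
    (∑ t ∈ Finset.range M, if p t then 2^t else 0) < 2^M := by
  induction M with
  | zero => simp
  | succ M ih =>
    rw [Finset.sum_range_succ]
    have h1 : (if p M then 2^M else 0) ≤ 2^M := by split <;> simp
    have h2 : 2^(M+1) = 2^M + 2^M := by rw [pow_succ]; ring
    omega

lemma testBit_sum (M : ℕ) (p : ℕ → Prop) [DecidablePred p] (t : ℕ) :
    (∑ t ∈ Finset.range M, if p t then 2^t else 0).testBit t = decide (t < M ∧ p t) := by
  induction M with
  | zero => simp
  | succ M ih =>
    rw [Finset.sum_range_succ]
    have hb := sum_pow_lt M p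
    have hrw : (∑ t ∈ Finset.range M, if p t then 2^t else 0) + (if p M then 2^M else 0)
        = 2^M * (if p M then 1 else 0) + (∑ t ∈ Finset.range M, if p t then 2^t else 0) := by
      split_ifs <;> ring
    rw [hrw, Nat.testBit_two_pow_mul_add _ hb t]
    by_cases ht : t < M
    · rw [if_pos ht, ih]
      have : (t < M ∧ p t) ↔ (t < M + 1 ∧ p t) := by
        constructor <;> rintro ⟨h, hp⟩ <;> exact ⟨by omega, hp⟩
      exact decide_eq_decide.mpr this
    · rw [if_neg ht]
      by_cases he : t = M
      · subst he
        simp only [Nat.sub_self]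
        split_ifs with hp <;> simp [hp]
      · have h1 : 0 < t - M := by omega
        have h2 : ¬ (t < M + 1) := by omega
        split_ifs with hp
        · rw [Nat.testBit_lt_two_pow (by
            calc (1:ℕ) < 2^1 := by norm_num
            _ ≤ 2^(t-M) := Nat.pow_le_pow_right (by norm_num) h1)]
          simp [h2]
        · simp [h2]

def ord (x : Fin m → Bool) : ℕ :=
  ∑ t ∈ Finset.range m, if Even (cnt x (m - t)) then 2^t else 0

lemma ord_lt (x : Fin m → Bool) : ord x < 2^m := sum_pow_lt m _

lemma ord_testBit (x : Fin m → Bool) (t : ℕ) :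
    (ord x).testBit t = decide (t < m ∧ Even (cnt x (m - t))) := testBit_sum m _ t

lemma cond_iff_bit (x : Fin m → Bool) (i : Fin m) :
    cond x i ↔ (ord x).testBit (m - 1 - (i : ℕ)) = false := by
  have him : (i : ℕ) < m := i.isLt
  have h1 : m - (m - 1 - (i : ℕ)) = (i : ℕ) + 1 := by omega
  have h2 : m - 1 - (i : ℕ) < m := by omega
  rw [cond_iff_odd, ord_testBit, h1]
  simp [h2, Nat.odd_iff, Nat.even_iff]

lemma ord_flip_testBit_le (x : Fin m → Bool) (i : Fin m) {t : ℕ} (h : m - t ≤ (i : ℕ)) :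
    (ord (flip x i)).testBit t = (ord x).testBit t := by
  rw [ord_testBit, ord_testBit, cnt_flip_le h]

lemma ord_flip_testBit_gt (x : Fin m → Bool) (i : Fin m) {t : ℕ} (h : (i : ℕ) < m - t) :
    (ord (flip x i)).testBit t = !((ord x).testBit t) := by
  have ht : t < m := by omega
  have hpar := cnt_flip_gt (x := x) (i := i) (k := m - t) h
  rw [ord_testBit, ord_testBit]
  by_cases he : Even (cnt x (m - t)) <;> simp [he, ht, hpar]

lemma ord_lt_flip {x : Fin m → Bool} {i : Fin m} (h : cond x i) :
    ord x < ord (flip x i) := by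
  have him : (i : ℕ) < m := i.isLt
  apply Nat.lt_of_testBit (m - 1 - (i : ℕ))
  · exact (cond_iff_bit x i).mp h
  · rw [ord_flip_testBit_gt x i (by omega), (cond_iff_bit x i).mp h]
    rfl
  · intro j hj
    exact (ord_flip_testBit_le x i (by omega)).symm

lemma ord_le_of_twE {x y : Fin m → Bool} (h : TwE m x y) : ord x ≤ ord y := by
  rcases twE_iff.mp h with rfl | ⟨i, rfl, hc⟩
  · exact le_rfl
  · exact le_of_lt (ord_lt_flip hc)

lemma parity_eq_of_bits {x y : Fin m → Bool} {K : ℕ}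
    (h : ∀ k, 1 ≤ k → k ≤ K → (Even (cnt x k) ↔ Even (cnt y k))) :
    ∀ j : Fin m, (j : ℕ) < K → x j = y j := by
  intro j hj
  have h0 : Even (cnt x (j : ℕ)) ↔ Even (cnt y (j : ℕ)) := by
    rcases Nat.eq_zero_or_pos (j : ℕ) with hz | hz
    · simp [hz, cnt_zero]
    · exact h _ hz (by omega)
  have h1 := h ((j : ℕ) + 1) (by omega) (by omega)
  rw [cnt_succ, cnt_succ] at h1
  simp only [Nat.even_iff] at h0 h1
  cases hx : x j <;> cases hy : y j <;> simp [hx, hy] at h0 h1 ⊢ <;> omega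

lemma ord_inj {x y : Fin m → Bool} (h : ord x = ord y) : x = y := by
  funext j
  refine parity_eq_of_bits (K := m) ?_ j j.isLt
  intro k h1 h2
  have := congrArg (fun N => N.testBit (m - k)) h
  simp only [ord_testBit] at this
  have hk : m - (m - k) = k := by omega
  have ht : m - k < m := by omega
  rw [hk] at this
  simpa [ht] using this

lemma ord_div_eq_iff {x y : Fin m → Bool} {d : ℕ} (hd : d ≤ m) :
    ord x / 2^d = ord y / 2^d ↔ ∀ j : Fin m, (j : ℕ) < m - d → x j = y j := by
  constructor
  · intro h
    refine parity_eq_of_bits (K := m - d) ?_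
    intro k h1 h2
    have := congrArg (fun N => N.testBit (m - k - d)) h
    simp only [testBit_div_pow] at this
    have hk : m - k - d + d = m - k := by omega
    rw [hk] at this
    simp only [ord_testBit] at this
    have hmk : m - (m - k) = k := by omega
    have ht : m - k < m := by omega
    rw [hmk] at this
    simpa [ht] using this
  · intro h
    apply Nat.eq_of_testBit_eq
    intro u
    rw [testBit_div_pow, testBit_div_pow]
    by_cases hu : u + d < m
    · rw [ord_testBit, ord_testBit,
        cnt_congr (fun j hj => h j (by omega))]
    · simp [ord_testBit, hu]

lemma consec {x : Fin m → Bool} (h : ord x + 1 < 2^m) :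
    ∃ i : Fin m, cond x i ∧ ord (flip x i) = ord x + 1 := by
  have hex : ∃ t, t < m ∧ (ord x).testBit t = false := by
    by_contra hall
    push_neg at hall
    simp only [ne_eq, Bool.not_eq_false] at hall
    have : ord x = 2^m - 1 := by
      apply Nat.eq_of_testBit_eq
      intro t
      rw [Nat.testBit_two_pow_sub_one]
      by_cases ht : t < m
      · simp [ht, hall t ht]
      · have hle : (2:ℕ)^m ≤ 2^t := Nat.pow_le_pow_right (by norm_num) (by omega)
        simp [ht, Nat.testBit_lt_two_pow (show ord x < 2^t by omega)]
    have hp : 0 < 2^m := Nat.pow_pos (by norm_num)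
    omega
  classical
  set t0 := Nat.find hex with ht0def
  obtain ⟨ht0m, ht0bit⟩ := Nat.find_spec hex
  have hmin : ∀ s, s < t0 → (ord x).testBit s = true := by
    intro s hs
    have h2 := Nat.find_min hex hs
    simp only [not_and, Bool.not_eq_false] at h2
    exact h2 (by omega)
  refine ⟨⟨m - 1 - t0, by omega⟩, ?_, ?_⟩
  · apply (cond_iff_bit x _).mpr
    have : m - 1 - (m - 1 - t0) = t0 := by omega
    simpa [this] using ht0bit
  · set i : Fin m := ⟨m - 1 - t0, by omega⟩ with hidef
    have hiv : (i : ℕ) = m - 1 - t0 := rfl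
    set y := flip x i with hy
    have e1 := Nat.div_add_mod (ord y) (2^(t0+1))
    have e2 := Nat.div_add_mod (ord x) (2^(t0+1))
    have hdivs : ord y / 2^(t0+1) = ord x / 2^(t0+1) := by
      apply Nat.eq_of_testBit_eq
      intro u
      rw [testBit_div_pow, testBit_div_pow]
      exact ord_flip_testBit_le x i (by omega)
    have hmodx : ord x % 2^(t0+1) = 2^t0 - 1 := by
      apply Nat.eq_of_testBit_eq
      intro u
      rw [Nat.testBit_mod_two_pow, Nat.testBit_two_pow_sub_one]
      rcases lt_trichotomy u t0 with hu | hu | hu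
      · simp [hu, show u < t0 + 1 by omega, hmin u hu]
      · subst hu
        simp [ht0bit, ht0def]
      · simp [show ¬ (u < t0 + 1) by omega, show ¬ (u < t0) by omega]
    have hmody : ord y % 2^(t0+1) = 2^t0 := by
      apply Nat.eq_of_testBit_eq
      intro u
      rw [Nat.testBit_mod_two_pow, Nat.testBit_two_pow]
      rcases lt_trichotomy u t0 with hu | hu | hu
      · rw [ord_flip_testBit_gt x i (by omega)]
        simp [hmin u hu, show u < t0 + 1 by omega, show ¬ (t0 = u) by omega]
      · subst hu
        rw [ord_flip_testBit_gt x i (by omega)]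
        simp [ht0bit, ht0def]
      · simp [show ¬ (u < t0 + 1) by omega, show ¬ (t0 = u) by omega]
    rw [hdivs] at e1
    rw [hmodx] at e2
    rw [hmody] at e1
    have hp : (0:ℕ) < 2^t0 := Nat.pow_pos (by norm_num)
    set A := 2^(t0+1) * (ord x / 2^(t0+1)) with hA
    omega

lemma flip_inj_idx {u : Fin n → Bool} {j j' : Fin n} (h : flip u j = flip u j') : j = j' := by
  by_contra hne
  have := congrFun h j
  rw [flip_self, flip_ne u hne] at this
  exact absurd this (Bool.not_ne_self _)

lemma edge_image {g : (Fin m → Bool) → (Fin n → Bool)} (hg : IsGraphHom (TwE m) (TwE n) g)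
    (x : Fin m → Bool) (i : Fin m) :
    g (flip x i) = g x ∨ ∃ j, g (flip x i) = flip (g x) j := by
  rcases edge_total x i with he | he
  · rcases twE_iff.mp (hg _ _ he) with hl | ⟨j, hj, _⟩
    · exact Or.inl hl.symm
    · exact Or.inr ⟨j, hj⟩
  · rcases twE_iff.mp (hg _ _ he) with hl | ⟨j, hj, _⟩
    · exact Or.inl hl
    · exact Or.inr ⟨j, by rw [hj, flip_flip]⟩

lemma dim_const {g : (Fin m → Bool) → (Fin n → Bool)} (hg : IsGraphHom (TwE m) (TwE n) g)
    (hD : DimPres g) (i : Fin m) (hnd : ¬ ∀ z, g (flip z i) = g z) :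
    ∃ j : Fin n, ∀ z, g (flip z i) = flip (g z) j := by
  push_neg at hnd
  obtain ⟨z₀, hz₀⟩ := hnd
  rcases edge_image hg z₀ i with he | ⟨j₀, hj₀⟩
  · exact absurd he hz₀
  refine ⟨j₀, fun z => ?_⟩
  rcases hD z₀ (flip z₀ i) z (flip z i) i (flips_flip z₀ i) (flips_flip z i) with
    ⟨h1, _⟩ | ⟨j, hf0, hf⟩
  · exact absurd h1.symm hz₀
  · have h2 : g (flip z₀ i) = flip (g z₀) j := flips_eq_flip hf0
    have hjj : j = j₀ := flip_inj_idx (by rw [← h2, hj₀])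
    have h3 := flips_eq_flip hf
    rw [h3, hjj]

lemma dim_inj_aux {g : (Fin m → Bool) → (Fin n → Bool)} (hg : IsGraphHom (TwE m) (TwE n) g)
    {i i' : Fin m} {j : Fin n}
    (hi : ∀ z, g (flip z i) = flip (g z) j) (hi' : ∀ z, g (flip z i') = flip (g z) j)
    (hlt : (i : ℕ) < (i' : ℕ)) : False := by
  set x : Fin m → Bool := fun _ => false with hx
  set b := flip x i' with hb
  have hne : i ≠ i' := by intro h; subst h; omega
  have hcnt : cnt b (i : ℕ) = cnt x (i : ℕ) := cnt_flip_le (le_of_lt hlt)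
  have hbi : b i = x i := flip_ne x hne
  have hcond_iff : cond x i ↔ cond b i := by rw [cond, cond, hcnt, hbi]
  have himg2 : g b = flip (g x) j := hi' x
  have himg3 : g (flip b i) = g x := by rw [hi b, himg2, flip_flip]
  have himg1 : g (flip x i) = flip (g x) j := hi x
  have key : TwE n (g x) (flip (g x) j) ∧ TwE n (flip (g x) j) (g x) := by
    by_cases hc : cond x i
    · have e1 := hg _ _ (twE_iff.mpr (Or.inr ⟨i, rfl, hc⟩) : TwE m x (flip x i))
      have e2 := hg _ _ (twE_iff.mpr (Or.inr ⟨i, rfl, hcond_iff.mp hc⟩) : TwE m b (flip b i))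
      rw [himg1] at e1
      rw [himg2, himg3] at e2
      exact ⟨e1, e2⟩
    · have hc1 : cond (flip x i) i := cond_of_not_cond hc
      have hcond_iff2 : cond (flip x i) i ↔ cond (flip b i) i := by
        rw [cond, cond]
        have hcc : cnt (flip x i) (i : ℕ) = cnt (flip b i) (i : ℕ) := by
          rw [cnt_flip_le le_rfl, cnt_flip_le le_rfl, hcnt]
        rw [hcc, flip_self, flip_self, hbi]
      have e1 := hg _ _ (twE_iff.mpr (Or.inr ⟨i, (flip_flip x i).symm, hc1⟩) : TwE m (flip x i) x)
      have e2 := hg _ _ (twE_iff.mpr (Or.inr ⟨i, (flip_flip b i).symm, hcond_iff2.mp hc1⟩) :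
        TwE m (flip b i) b)
      rw [himg1] at e1
      rw [himg2, himg3] at e2
      exact ⟨e2, e1⟩
  have heq := twE_anti key.1 key.2
  have hj := congrFun heq j
  rw [flip_self] at hj
  exact absurd hj.symm (Bool.not_ne_self _)

lemma dim_inj {g : (Fin m → Bool) → (Fin n → Bool)} (hg : IsGraphHom (TwE m) (TwE n) g)
    {i i' : Fin m} {j : Fin n}
    (hi : ∀ z, g (flip z i) = flip (g z) j) (hi' : ∀ z, g (flip z i') = flip (g z) j)
    (hne : i ≠ i') : False := by
  rcases lt_trichotomy (i : ℕ) (i' : ℕ) with h | h | h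
  · exact dim_inj_aux hg hi hi' h
  · exact hne (Fin.ext h)
  · exact dim_inj_aux hg hi' hi h

lemma forward {g : (Fin m → Bool) → (Fin n → Bool)} (hg : IsGraphHom (TwE m) (TwE n) g)
    (hD : DimPres g) :
    ∃ c : ℕ, ∀ y ∈ Set.range g, (g ⁻¹' {y}).ncard = c := by
  classical
  set Pd : Fin m → Prop := fun i => ∀ z, g (flip z i) = g z with hPd
  have hsel : ∀ i : Fin m, ¬ Pd i → ∃ j : Fin n, ∀ z, g (flip z i) = flip (g z) j :=
    fun i h => dim_const hg hD i h
  choose jf hjf using hsel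
  have hjinj : ∀ i i' (h : ¬ Pd i) (h' : ¬ Pd i'), jf i h = jf i' h' → i = i' := by
    intro i i' h h' he
    by_contra hne
    exact dim_inj hg (hjf i h) (he ▸ hjf i' h') hne
  have diff_desc : ∀ s : Finset (Fin m), ∀ x x' : Fin m → Bool,
      (∀ t, x t ≠ x' t ↔ t ∈ s) →
      ∀ u : Fin n, (g x u ≠ g x' u ↔ ∃ i, ∃ _ : i ∈ s, ∃ hnd : ¬ Pd i, jf i hnd = u) := by
    intro s
    induction s using Finset.induction_on with
    | empty =>
      intro x x' hs u
      have hx : x = x' := funext fun t => by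
        by_contra hne
        exact absurd ((hs t).mp hne) (Finset.notMem_empty t)
      subst hx
      simp
    | @insert a s ha ih =>
      intro x x' hs u
      have hxa : x a ≠ x' a := (hs a).mpr (Finset.mem_insert_self a s)
      have hxa' : x a = !(x' a) := by
        cases h1 : x a <;> cases h2 : x' a <;> simp_all
      set x'' := flip x' a with hx''
      have hdx : ∀ t, x t ≠ x'' t ↔ t ∈ s := by
        intro t
        by_cases hta : t = a
        · subst hta
          have : x'' t = x t := by rw [hx'', flip_self, ← hxa']
          simp [this, ha]
        · rw [hx'', flip_ne x' hta]
          rw [hs t]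
          simp [hta]
      have ihx := ih x x'' hdx
      have hx'eq : x' = flip x'' a := by rw [hx'', flip_flip]
      by_cases hPda : Pd a
      · have hgx : g x' = g x'' := by rw [hx'eq]; exact hPda x''
        rw [hgx, ihx u]
        constructor
        · rintro ⟨i, hi, hnd, hji⟩
          exact ⟨i, Finset.mem_insert_of_mem hi, hnd, hji⟩
        · rintro ⟨i, hi, hnd, hji⟩
          rcases Finset.mem_insert.mp hi with rfl | his
          · exact absurd hPda hnd
          · exact ⟨i, his, hnd, hji⟩
      · have hja : g x' = flip (g x'') (jf a hPda) := by rw [hx'eq]; exact hjf a hPda x''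
        by_cases hu : u = jf a hPda
        · have hval : g x' u = !(g x'' u) := by rw [hja, hu, flip_self]
          constructor
          · intro _
            exact ⟨a, Finset.mem_insert_self a s, hPda, hu.symm⟩
          · intro _
            have hnos : ¬ (g x u ≠ g x'' u) := by
              rw [ihx u]
              rintro ⟨i, hi, hnd, hji⟩
              have : i = a := hjinj i a hnd hPda (by rw [hji, hu])
              exact ha (this ▸ hi)
            have heq : g x u = g x'' u := not_not.mp hnos
            rw [hval, ← heq]
            simp
        · have hval : g x' u = g x'' u := by rw [hja]; exact flip_ne _ (fun h => hu h)
          rw [hval, ihx u]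
          constructor
          · rintro ⟨i, hi, hnd, hji⟩
            exact ⟨i, Finset.mem_insert_of_mem hi, hnd, hji⟩
          · rintro ⟨i, hi, hnd, hji⟩
            rcases Finset.mem_insert.mp hi with rfl | his
            · cases Subsingleton.elim hnd hPda
              exact absurd hji.symm hu
            · exact ⟨i, his, hnd, hji⟩
  have fib : ∀ x x' : Fin m → Bool, g x = g x' ↔ ∀ i : Fin m, ¬ Pd i → x i = x' i := by
    intro x x'
    set s : Finset (Fin m) := Finset.univ.filter (fun t => x t ≠ x' t) with hsdef
    have hs : ∀ t, x t ≠ x' t ↔ t ∈ s := by intro t; simp [hsdef]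
    have hd := diff_desc s x x' hs
    constructor
    · intro hgg i hnd
      by_contra hne
      have : g x (jf i hnd) ≠ g x' (jf i hnd) := (hd _).mpr ⟨i, (hs i).mp hne, hnd, rfl⟩
      exact this (by rw [hgg])
    · intro hpre
      funext u
      by_contra hne
      obtain ⟨i, hi, hnd, _⟩ := (hd u).mp hne
      exact ((hs i).mpr hi) (hpre i hnd)
  refine ⟨2 ^ Nat.card {i : Fin m // Pd i}, ?_⟩
  rintro y ⟨x, rfl⟩
  have hset : g ⁻¹' {g x} = {x' | ∀ i : Fin m, ¬ Pd i → x' i = x i} := by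
    ext x'
    simp only [Set.mem_preimage, Set.mem_singleton_iff, Set.mem_setOf_eq]
    exact fib x' x
  rw [hset]
  have hequiv : {x' : Fin m → Bool | ∀ i : Fin m, ¬ Pd i → x' i = x i} ≃
      ({i : Fin m // Pd i} → Bool) :=
    { toFun := fun x' p => x'.1 p.1
      invFun := fun f => ⟨fun i => if h : Pd i then f ⟨i, h⟩ else x i, fun i hnd => dif_neg hnd⟩
      left_inv := by
        rintro ⟨x', hx'⟩
        apply Subtype.ext
        funext i
        by_cases h : Pd i
        · exact dif_pos h
        · exact (dif_neg h).trans (hx' i h).symm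
      right_inv := by
        intro f
        funext p
        rcases p with ⟨i, hi⟩
        exact dif_pos hi }
  rw [← Nat.card_coe_set_eq, Nat.card_congr hequiv, Nat.card_fun]
  simp [Nat.card_eq_fintype_card]

lemma bool_ne_not (b : Bool) : b ≠ !b := by cases b <;> simp

lemma flip_conn {P : (Fin m → Bool) → Prop} (x₀ : Fin m → Bool)
    (hstep : ∀ x k, P x → P (flip x k)) (h0 : P x₀) : ∀ x, P x := by
  have key : ∀ N : ℕ, ∀ x : Fin m → Bool,
      (Finset.univ.filter (fun t => x t ≠ x₀ t)).card = N → P x := by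
    intro N
    induction N using Nat.strong_induction_on with
    | _ N ih =>
      intro x hx
      rcases Nat.eq_zero_or_pos N with rfl | hpos
      · have hxe : x = x₀ := funext fun t => by
          by_contra hne
          have ht : t ∈ Finset.univ.filter (fun t => x t ≠ x₀ t) := by simp [hne]
          rw [Finset.card_eq_zero] at hx
          rw [hx] at ht
          exact Finset.notMem_empty t ht
        exact hxe ▸ h0
      · have hne : (Finset.univ.filter (fun t => x t ≠ x₀ t)).Nonempty := by
          rw [← Finset.card_pos, hx]; exact hpos
        obtain ⟨t, ht⟩ := hne
        have htd : x t ≠ x₀ t := (Finset.mem_filter.mp ht).2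
        have hcard : (Finset.univ.filter (fun s => flip x t s ≠ x₀ s)).card = N - 1 := by
          have hfe : Finset.univ.filter (fun s => flip x t s ≠ x₀ s)
              = (Finset.univ.filter (fun s => x s ≠ x₀ s)).erase t := by
            ext s
            simp only [Finset.mem_filter, Finset.mem_univ, true_and, Finset.mem_erase]
            by_cases hst : s = t
            · subst hst
              have hx0 : x₀ s = !(x s) := by
                cases h1 : x s <;> cases h2 : x₀ s <;> simp_all
              simp [flip_self, hx0]
            · simp [flip_ne x hst, hst]
          rw [hfe, Finset.card_erase_of_mem ht, hx]
        have hP := ih (N-1) (by omega) (flip x t) hcard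
        have h2 := hstep (flip x t) t hP
        rw [flip_flip] at h2
        exact h2
  exact fun x => key _ x rfl

lemma backward {g : (Fin m → Bool) → (Fin n → Bool)} (hg : IsGraphHom (TwE m) (TwE n) g)
    {c : ℕ} (hc : ∀ y ∈ Set.range g, (g ⁻¹' {y}).ncard = c) : DimPres g := by
  classical
  have hc1 : 1 ≤ c := by
    have h0 := hc (g (fun _ => false)) ⟨_, rfl⟩
    have hnem : (g ⁻¹' {g (fun _ => false)}).Nonempty := ⟨fun _ => false, rfl⟩
    have := (Set.ncard_pos (Set.toFinite _)).mpr hnem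
    omega
  -- counting : c divides 2^m
  have hcount : 2^m = (Finset.univ.image g).card * c := by
    have h1 : (Finset.univ : Finset (Fin m → Bool)).card
        = ∑ y ∈ Finset.univ.image g, (Finset.univ.filter (fun x => g x = y)).card :=
      Finset.card_eq_sum_card_fiberwise (fun x _ => Finset.mem_image_of_mem g (Finset.mem_univ x))
    have h2 : ∀ y ∈ Finset.univ.image g, (Finset.univ.filter (fun x => g x = y)).card = c := by
      intro y hy
      obtain ⟨x, _, rfl⟩ := Finset.mem_image.mp hy
      have h3 := hc (g x) ⟨x, rfl⟩
      rw [← h3]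
      have h4 : g ⁻¹' {g x} = ↑(Finset.univ.filter (fun z => g z = g x)) := by
        ext z; simp
      rw [h4, Set.ncard_coe_finset]
    rw [Finset.sum_congr rfl h2, Finset.sum_const, smul_eq_mul] at h1
    rw [← h1, Finset.card_univ, Fintype.card_fun]
    simp
  have hdvd : c ∣ 2^m := ⟨(Finset.univ.image g).card, by rw [hcount, mul_comm]⟩
  obtain ⟨d, hdm, hcd⟩ := (Nat.dvd_prime_pow Nat.prime_two).mp hdvd
  -- the order isomorphism
  have hordinj : Function.Injective (ord : (Fin m → Bool) → ℕ) := fun a b h => ord_inj h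
  have hbij : Function.Bijective (fun x : Fin m → Bool => (⟨ord x, ord_lt x⟩ : Fin (2^m))) := by
    rw [Fintype.bijective_iff_injective_and_card]
    constructor
    · intro a b h
      exact ord_inj (congrArg Fin.val h)
    · simp [Fintype.card_fun]
  set e := Equiv.ofBijective _ hbij with he
  set v : ℕ → (Fin m → Bool) :=
    fun a => if h : a < 2^m then e.symm ⟨a, h⟩ else (fun _ => false) with hvdef
  have hvo : ∀ x, v (ord x) = x := fun x => by
    show (if h : ord x < 2^m then e.symm ⟨ord x, h⟩ else _) = x
    rw [dif_pos (ord_lt x)]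
    exact e.symm_apply_apply x
  have hov : ∀ a, a < 2^m → ord (v a) = a := by
    intro a h
    show ord (if h : a < 2^m then e.symm ⟨a, h⟩ else _) = a
    rw [dif_pos h]
    exact congrArg Fin.val (e.apply_symm_apply ⟨a, h⟩)
  -- Hamiltonian step
  have hstep : ∀ a, a + 1 < 2^m → TwE m (v a) (v (a+1)) := by
    intro a h1
    obtain ⟨i, hcnd, hordf⟩ := consec (x := v a) (by rw [hov a (by omega)]; exact h1)
    have hv1 : v (a+1) = flip (v a) i := by
      apply hordinj
      rw [hov (a+1) h1, hordf, hov a (by omega)]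
    rw [hv1]
    exact twE_iff.mpr (Or.inr ⟨i, rfl, hcnd⟩)
  -- monotonicity
  have hmono : ∀ k a, a + k < 2^m → ord (g (v a)) ≤ ord (g (v (a+k))) := by
    intro k
    induction k with
    | zero => intro a h; exact le_rfl
    | succ k ih =>
      intro a h
      have e1 := ih a (by omega)
      have e2 := ord_le_of_twE (hg _ _ (hstep (a+k) (by omega)))
      rw [show a + (k+1) = a + k + 1 by omega]
      exact le_trans e1 e2
  have hmono' : ∀ a b, a ≤ b → b < 2^m → ord (g (v a)) ≤ ord (g (v b)) := by
    intro a b hab hb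
    have := hmono (b - a) a (by omega)
    rwa [show a + (b - a) = b by omega] at this
  -- interval property of fibres
  have hintv : ∀ a b cc, a ≤ b → b ≤ cc → cc < 2^m →
      g (v a) = g (v cc) → g (v b) = g (v a) := by
    intro a b cc hab hbc hcc hgeq
    have h1 := hmono' a b hab (by omega)
    have h2 := hmono' b cc hbc hcc
    rw [hgeq] at h1
    apply ord_inj
    rw [hgeq]
    omega
  -- each fibre, seen inside positions, has exactly c elements
  have hPcard : ∀ q, q * c < 2^m →
      ((Finset.range (2^m)).filter (fun b => g (v b) = g (v (q*c)))).card = c := by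
    intro q hq
    have hnc := hc (g (v (q*c))) ⟨_, rfl⟩
    have h4 : g ⁻¹' {g (v (q*c))} = ↑(Finset.univ.filter (fun x : Fin m → Bool => g x = g (v (q*c)))) := by
      ext z; simp
    rw [h4, Set.ncard_coe_finset] at hnc
    refine Eq.trans ?_ hnc
    apply Finset.card_bij (fun b _ => v b)
    · intro b hb
      simp only [Finset.mem_filter, Finset.mem_range] at hb
      simp only [Finset.mem_filter, Finset.mem_univ, true_and]
      exact hb.2
    · intro b1 hb1 b2 hb2 hvv
      simp only [Finset.mem_filter, Finset.mem_range] at hb1 hb2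
      have := congrArg ord hvv
      rwa [hov b1 hb1.1, hov b2 hb2.1] at this
    · intro x hx
      simp only [Finset.mem_filter, Finset.mem_univ, true_and] at hx
      refine ⟨ord x, ?_, hvo x⟩
      simp only [Finset.mem_filter, Finset.mem_range]
      exact ⟨ord_lt x, by rw [hvo x]; exact hx⟩
  have hdm' : ∀ b : ℕ, (b / c) * c + b % c = b := fun b => by
    rw [mul_comm]; exact Nat.div_add_mod b c
  -- blocks
  have hblock : ∀ q, ∀ r, r < c → q * c + r < 2^m → g (v (q*c + r)) = g (v (q*c)) := by
    intro q
    induction q using Nat.strong_induction_on with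
    | _ q ih =>
      intro r hr hlt
      have hqc : q * c < 2^m := by omega
      have hi : ∀ b, b < q*c → g (v b) ≠ g (v (q*c)) := by
        intro b hb hbe
        set q' := b / c with hq'def
        have hq'lt : q' < q := by
          rw [hq'def]
          exact (Nat.div_lt_iff_lt_mul (by omega)).mpr hb
        have hdmb : q' * c + b % c = b := hdm' b
        have hmodb : b % c < c := Nat.mod_lt _ (by omega)
        have hsm : (q' + 1) * c = q' * c + c := by ring
        have hqq : (q' + 1) * c ≤ q * c := Nat.mul_le_mul_right c (by omega)
        have h1 : g (v b) = g (v (q' * c)) := by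
          have := ih q' hq'lt (b % c) hmodb (by omega)
          rwa [hdmb] at this
        have hfilq' := hPcard q' (by omega)
        have hsub : insert (q*c) (Finset.image (fun r' => q'*c + r') (Finset.range c))
            ⊆ (Finset.range (2^m)).filter (fun b' => g (v b') = g (v (q'*c))) := by
          intro z hz
          simp only [Finset.mem_filter, Finset.mem_range]
          rcases Finset.mem_insert.mp hz with rfl | hz2
          · exact ⟨hqc, hbe.symm.trans h1⟩
          · obtain ⟨r', hr', rfl⟩ := Finset.mem_image.mp hz2
            simp only [Finset.mem_range] at hr'
            exact ⟨by omega, ih q' hq'lt r' hr' (by omega)⟩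
        have hcard_le := Finset.card_le_card hsub
        rw [hfilq'] at hcard_le
        have hnotmem : q*c ∉ Finset.image (fun r' => q'*c + r') (Finset.range c) := by
          intro hmem
          obtain ⟨r', hr', heq⟩ := Finset.mem_image.mp hmem
          simp only [Finset.mem_range] at hr'
          omega
        rw [Finset.card_insert_of_notMem hnotmem,
          Finset.card_image_of_injective _ (fun a b h => by dsimp at h; omega : Function.Injective (fun r' => q'*c + r'))] at hcard_le
        rw [Finset.card_range] at hcard_le
        omega
      by_contra hne
      have hsub2 : (Finset.range (2^m)).filter (fun b' => g (v b') = g (v (q*c)))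
          ⊆ Finset.Ico (q*c) (q*c + r) := by
        intro b hb
        simp only [Finset.mem_filter, Finset.mem_range] at hb
        obtain ⟨hb1, hb2⟩ := hb
        have hge : q*c ≤ b := by
          by_contra hlt2
          exact hi b (by omega) hb2
        rw [Finset.mem_Ico]
        refine ⟨hge, ?_⟩
        by_contra hge2
        exact hne (hintv (q*c) (q*c+r) b (by omega) (by omega) hb1 hb2.symm)
      have hle2 := Finset.card_le_card hsub2
      rw [hPcard q (by omega), Nat.card_Ico] at hle2
      omega
  -- separation of blocks
  have hsep : ∀ q' q, q' < q → q * c < 2^m → g (v (q'*c)) ≠ g (v (q*c)) := by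
    intro q' q hlt hqm heq
    have hsm : (q' + 1) * c = q' * c + c := by ring
    have hqq : (q' + 1) * c ≤ q * c := Nat.mul_le_mul_right c (by omega)
    have hfilq' := hPcard q' (by omega)
    have hsub : insert (q*c) (Finset.image (fun r' => q'*c + r') (Finset.range c))
        ⊆ (Finset.range (2^m)).filter (fun b' => g (v b') = g (v (q'*c))) := by
      intro z hz
      simp only [Finset.mem_filter, Finset.mem_range]
      rcases Finset.mem_insert.mp hz with rfl | hz2
      · exact ⟨by omega, heq.symm⟩
      · obtain ⟨r', hr', rfl⟩ := Finset.mem_image.mp hz2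
        simp only [Finset.mem_range] at hr'
        exact ⟨by omega, hblock q' r' hr' (by omega)⟩
    have hcard_le := Finset.card_le_card hsub
    rw [hfilq'] at hcard_le
    have hnotmem : q*c ∉ Finset.image (fun r' => q'*c + r') (Finset.range c) := by
      intro hmem
      obtain ⟨r', hr', heq2⟩ := Finset.mem_image.mp hmem
      simp only [Finset.mem_range] at hr'
      omega
    rw [Finset.card_insert_of_notMem hnotmem,
      Finset.card_image_of_injective _ (fun a b h => by dsimp at h; omega : Function.Injective (fun r' => q'*c + r'))] at hcard_le
    rw [Finset.card_range] at hcard_le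
    omega
  -- alignment
  have halign : ∀ a b, a < 2^m → b < 2^m → (g (v a) = g (v b) ↔ a / c = b / c) := by
    intro a b ha hb
    have hba : g (v a) = g (v ((a/c)*c)) := by
      have := hblock (a/c) (a % c) (Nat.mod_lt _ (by omega)) (by rw [hdm' a]; exact ha)
      rwa [hdm' a] at this
    have hbb : g (v b) = g (v ((b/c)*c)) := by
      have := hblock (b/c) (b % c) (Nat.mod_lt _ (by omega)) (by rw [hdm' b]; exact hb)
      rwa [hdm' b] at this
    constructor
    · intro h
      by_contra hne
      rcases Nat.lt_or_ge (a/c) (b/c) with hlt | hge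
      · exact hsep (a/c) (b/c) hlt (by have := hdm' b; omega)
          (hba.symm.trans (h.trans hbb))
      · have hlt2 : b/c < a/c := by omega
        exact hsep (b/c) (a/c) hlt2 (by have := hdm' a; omega)
          (hbb.symm.trans (h.symm.trans hba))
    · intro h
      rw [hba, hbb, h]
  -- fibre criterion
  have hfib : ∀ x x' : Fin m → Bool,
      g x = g x' ↔ ∀ j : Fin m, (j : ℕ) < m - d → x j = x' j := by
    intro x x'
    have h1 := halign (ord x) (ord x') (ord_lt x) (ord_lt x')
    rw [hvo x, hvo x'] at h1
    rw [h1, hcd]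
    exact ord_div_eq_iff hdm
  -- now prove DimPres
  intro x₁ y₁ x₂ y₂ i hf1 hf2
  have hy1 : y₁ = flip x₁ i := flips_eq_flip hf1
  have hy2 : y₂ = flip x₂ i := flips_eq_flip hf2
  subst hy1
  subst hy2
  by_cases hiM : (i : ℕ) < m - d
  · right
    have hsel : ∀ (i' : Fin m), (i' : ℕ) < m - d → ∀ x, ∃ j, g (flip x i') = flip (g x) j := by
      intro i' hi' x
      have hnecol : g x ≠ g (flip x i') := by
        intro hEq
        have := (hfib x (flip x i')).mp hEq i' hi'
        rw [flip_self] at this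
        exact bool_ne_not _ this
      rcases edge_image hg x i' with h | h
      · exact absurd h (fun hh => hnecol hh.symm)
      · exact h
    choose js hjs using hsel
    have huniq : ∀ (u : Fin n → Bool) (j j' : Fin n), flip u j = flip u j' → j = j' :=
      fun u j j' h => flip_inj_idx h
    -- the chosen dimension is invariant under flipping any coordinate
    have hstep2 : ∀ x k, js i hiM x = js i hiM (flip x k) := by
      intro x k
      by_cases hki : k = i
      · subst hki
        have e1 : g (flip (flip x k) k) = flip (g (flip x k)) (js k hiM x) := by
          rw [flip_flip, hjs k hiM x, flip_flip]
        exact huniq _ _ _ (e1.symm.trans (hjs k hiM (flip x k)))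
      · by_cases hkM : (k : ℕ) < m - d
        · -- square case
          set u := g x with hu
          set j1 := js i hiM x with hj1
          set j2 := js i hiM (flip x k) with hj2
          set l1 := js k hkM x with hl1
          set l2 := js k hkM (flip x i) with hl2
          have e_a : g (flip x i) = flip u j1 := hjs i hiM x
          have e_b : g (flip x k) = flip u l1 := hjs k hkM x
          have e_ab : g (flip (flip x k) i) = flip (g (flip x k)) j2 := hjs i hiM (flip x k)
          have e_ab' : g (flip (flip x i) k) = flip (g (flip x i)) l2 := hjs k hkM (flip x i)
          have hsq : flip (flip x k) i = flip (flip x i) k := flip_comm x (fun h => hki h.symm)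
          have combined : flip (flip u l1) j2 = flip (flip u j1) l2 := by
            rw [← e_b, ← e_a, ← e_ab, ← e_ab', hsq]
          -- g (flip (flip x k) i) ≠ g x
          have hne1 : g (flip (flip x k) i) ≠ u := by
            intro h
            have := (hfib _ x).mp h i hiM
            rw [flip_self, flip_ne x (fun h2 => hki h2.symm)] at this
            exact bool_ne_not _ this.symm
          have hlj2 : l1 ≠ j2 := by
            intro h
            rw [e_ab, e_b, ← h, flip_flip] at hne1
            exact hne1 rfl
          have hj1l : j1 ≠ l1 := by
            intro h
            have : g (flip x i) = g (flip x k) := by rw [e_a, e_b, h]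
            have h2 := (hfib _ _).mp this i hiM
            rw [flip_self, flip_ne x (fun h => hki h.symm)] at h2
            exact bool_ne_not _ h2.symm
          by_contra hne12
          -- hne12 : ¬ j1 = j2
          have hl2j1 : l2 = j1 := by
            by_contra hne'
            have hcf := congrFun combined j1
            rw [flip_ne _ (fun h => hne12 h), flip_ne _ hj1l,
              flip_ne _ (fun h => hne' h.symm), flip_self] at hcf
            exact bool_ne_not _ hcf
          have hcf := congrFun combined j2
          rw [flip_self, flip_ne _ (fun h => hlj2 h.symm), hl2j1, flip_flip] at hcf
          exact bool_ne_not _ hcf.symm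
        · -- flipping k does not change the fibre
          have hcol : g (flip x k) = g x := by
            apply (hfib (flip x k) x).mpr
            intro j hj
            exact flip_ne x (fun hjk => absurd hj (by rw [hjk]; omega))
          have hcol2 : g (flip (flip x k) i) = g (flip x i) := by
            apply (hfib _ _).mpr
            intro j hj
            by_cases hji : j = i
            · subst hji
              rw [flip_self, flip_self, flip_ne x (fun h => hki h.symm)]
            · rw [flip_ne _ hji, flip_ne _ hji]
              exact flip_ne x (fun hjk => absurd hj (by rw [hjk]; omega))
          apply huniq (g x)
          rw [← hjs i hiM x, ← hcol2, hjs i hiM (flip x k), hcol]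
    have hconst : ∀ x, js i hiM x = js i hiM x₁ :=
      flip_conn x₁ (fun x k h => (hstep2 x k).symm.trans h) rfl
    refine ⟨js i hiM x₁, ?_, ?_⟩
    · rw [hjs i hiM x₁]
      exact flips_flip _ _
    · rw [hjs i hiM x₂, hconst x₂]
      exact flips_flip _ _
  · left
    constructor
    · apply (hfib x₁ (flip x₁ i)).mpr
      intro j hj
      exact (flip_ne x₁ (fun hji => absurd hj (by rw [hji]; omega))).symm
    · apply (hfib x₂ (flip x₂ i)).mpr
      intro j hj
      exact (flip_ne x₂ (fun hji => absurd hj (by rw [hji]; omega))).symm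

end Tw14

theorem stmt14 (m n : ℕ) (g : (Fin m → Bool) → (Fin n → Bool))
    (hg : IsGraphHom (TwE m) (TwE n) g) :
    DimPres g ↔ ∃ c : ℕ, ∀ y ∈ Set.range g, (g ⁻¹' {y}).ncard = c := by
  constructor
  · intro hD
    exact Tw14.forward hg hD
  · rintro ⟨c, hc⟩
    exact Tw14.backward hg hc
end

section
/- Let g be a dimension-preserving graph morphism from the standard m-cube to the standard n-cube. Then g is injective on dimensions: if (x₁, y₁) and (x₂, y₂) are non-loop edges of the standard m-cube flipping coordinates i₁ and i₂ respectively, and their images (g x₁, g y₁) and (g x₂, g y₂) are both non-loop edges flipping the same coordinate j of the standard n-cube, then i₁ = i₂. -/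
/-- Edge relation of the standard n-cube. -/
def CubeE (n : ℕ) (x y : Fin n → Bool) : Prop :=
  x = y ∨ ∃ i : Fin n, x i = false ∧ y i = true ∧ ∀ j, j ≠ i → x j = y j

lemma flips_unique {n : ℕ} {x y : Fin n → Bool} {j j' : Fin n}
    (h : Flips x y j) (h' : Flips x y j') : j = j' := by
  by_contra hne
  exact h.1 (h'.2 j hne)

lemma flips_dir {n : ℕ} {x y : Fin n → Bool} {j : Fin n}
    (he : CubeE n x y) (hf : Flips x y j) : x j = false ∧ y j = true := by
  rcases he with h | ⟨i, hxi, hyi, hoff⟩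
  · exact absurd (congrFun h j) hf.1
  · have : i = j := by
      by_contra hne
      exact absurd (hf.2 i hne) (by simp [hxi, hyi])
    subst this
    exact ⟨hxi, hyi⟩

lemma dim_transfer {m n : ℕ} {g : (Fin m → Bool) → (Fin n → Bool)} (hd : DimPres g)
    {a b c d : Fin m → Bool} {i : Fin m} {j : Fin n}
    (hab : Flips a b i) (hcd : Flips c d i) (hj : Flips (g a) (g b) j) :
    Flips (g c) (g d) j := by
  rcases hd a b c d i hab hcd with ⟨h1, _⟩ | ⟨j', h1, h2⟩
  · exact absurd (congrFun h1 j) hj.1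
  · rwa [flips_unique h1 hj] at h2

theorem stmt15 (m n : ℕ) (g : (Fin m → Bool) → (Fin n → Bool))
    (hg : IsGraphHom (CubeE m) (CubeE n) g) (hd : DimPres g)
    (x₁ y₁ x₂ y₂ : Fin m → Bool) (i₁ i₂ : Fin m) (j : Fin n)
    (he₁ : CubeE m x₁ y₁) (hf₁ : Flips x₁ y₁ i₁)
    (he₂ : CubeE m x₂ y₂) (hf₂ : Flips x₂ y₂ i₂)
    (hge₁ : CubeE n (g x₁) (g y₁)) (hgf₁ : Flips (g x₁) (g y₁) j)
    (hge₂ : CubeE n (g x₂) (g y₂)) (hgf₂ : Flips (g x₂) (g y₂) j) :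
    i₁ = i₂ := by
  by_contra hne
  -- directions of the original edges
  obtain ⟨hx1, hy1⟩ := flips_dir he₁ hf₁
  -- build the square on coordinates i₁, i₂
  set p00 : Fin m → Bool := Function.update (Function.update x₁ i₁ false) i₂ false with hp00
  set p10 : Fin m → Bool := Function.update p00 i₁ true with hp10
  set p01 : Fin m → Bool := Function.update p00 i₂ true with hp01
  set p11 : Fin m → Bool := Function.update p01 i₁ true with hp11
  have hne' : i₂ ≠ i₁ := fun h => hne h.symm
  have f1 : Flips p00 p10 i₁ := by
    constructor
    · simp [hp00, hp10, Function.update, hne']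
    · intro k hk; simp [hp10, Function.update, hk]
  have f2 : Flips p01 p11 i₁ := by
    constructor
    · simp [hp00, hp01, hp11, Function.update, hne, hne']
    · intro k hk; simp [hp11, Function.update, hk]
  have f3 : Flips p00 p01 i₂ := by
    constructor
    · simp [hp00, hp01, Function.update]
    · intro k hk; simp [hp01, Function.update, hk]
  have f4 : Flips p10 p11 i₂ := by
    constructor
    · simp [hp00, hp10, hp01, hp11, Function.update, hne, hne']
    · intro k hk
      simp only [hp11, hp10, hp01, Function.update]
      by_cases hk1 : k = i₁ <;> simp [hk1, hk]
  have e1 : CubeE m p00 p10 := by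
    refine Or.inr ⟨i₁, ?_, ?_, f1.2⟩
    · simp [hp00, Function.update, hne']
    · simp [hp10, Function.update]
  have e2 : CubeE m p01 p11 := by
    refine Or.inr ⟨i₁, ?_, ?_, f2.2⟩
    · simp [hp00, hp01, Function.update, hne, hne']
    · simp [hp11, Function.update]
  have e3 : CubeE m p00 p01 := by
    refine Or.inr ⟨i₂, ?_, ?_, f3.2⟩
    · simp [hp00, Function.update]
    · simp [hp01, Function.update]
  have e4 : CubeE m p10 p11 := by
    refine Or.inr ⟨i₂, ?_, ?_, f4.2⟩
    · simp [hp00, hp10, Function.update, hne']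
    · simp [hp11, hp01, Function.update, hne, hne']
  -- transfer flipping info through g
  have g1 : Flips (g p00) (g p10) j := dim_transfer hd hf₁ f1 hgf₁
  have g2 : Flips (g p01) (g p11) j := dim_transfer hd hf₁ f2 hgf₁
  have g3 : Flips (g p00) (g p01) j := dim_transfer hd hf₂ f3 hgf₂
  have g4 : Flips (g p10) (g p11) j := dim_transfer hd hf₂ f4 hgf₂
  have d1 := flips_dir (hg _ _ e1) g1
  have d4 := flips_dir (hg _ _ e4) g4
  rw [d1.2] at d4
  exact absurd d4.1 (by simp)
end

section
/- Let n be a natural number and let g be any bijection between Fin n → Bool and Fin (2^n) such that for all vertices x, y, the reflexive-transitive closure of the twisted-cube edge relation T_n relates x to y iff g x ≤ g y. Then for every vertex v : Fin n → Bool, the number of outgoing non-loop edges at v (i.e., the number of vertices w ≠ v with T_n v w) equals the number of zeros in the n-digit binary representation of the order number of v, i.e., the number of indices i < n such that the i-th binary digit of the natural number (g v : ℕ) is 0. -/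
namespace Tw16

variable {n : ℕ}

def pc (v : Fin n → Bool) (i : Fin n) : ℕ :=
  (Finset.univ.filter (fun j : Fin n => j < i ∧ v j = false)).card

def rb (v : Fin n → Bool) (i : Fin n) : Bool :=
  xor (v i) (decide (Odd (pc v i)))

lemma rb_eq_false_iff (v : Fin n → Bool) (i : Fin n) :
    rb v i = false ↔ (v i = true ↔ Odd (pc v i)) := by
  unfold rb
  by_cases h : Odd (pc v i) <;> cases hv : v i <;> simp [h]

def bv (v : Fin n → Bool) (k : Fin n) : Bool := rb v k.rev

lemma rb_eq_bv (v : Fin n → Bool) (i : Fin n) : rb v i = bv v i.rev := by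
  simp [bv]

def S : (n : ℕ) → (Fin n → Bool) → ℕ :=
  fun n f => ∑ k : Fin n, (f k).toNat * 2 ^ (k : ℕ)

lemma S_succ (f : Fin (n + 1) → Bool) :
    S (n + 1) f = (f 0).toNat + 2 * S n (f ∘ Fin.succ) := by
  rw [S, Fin.sum_univ_succ, S, Finset.mul_sum]
  simp only [Fin.val_zero, pow_zero, mul_one, Function.comp_apply]
  congr 1
  apply Finset.sum_congr rfl
  intro i _
  rw [Fin.val_succ, pow_succ]
  ring

lemma S_lt (f : Fin n → Bool) : S n f < 2 ^ n := by
  induction n with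
  | zero => simp [S]
  | succ n ih =>
    have h1 := ih (f ∘ Fin.succ)
    have h2 : (f 0).toNat ≤ 1 := Bool.toNat_le _
    rw [S_succ]
    have : 2 ^ (n + 1) = 2 * 2 ^ n := by ring
    omega

lemma S_testBit (f : Fin n → Bool) (k : Fin n) :
    (S n f).testBit (k : ℕ) = f k := by
  induction n with
  | zero => exact absurd k.isLt (by omega)
  | succ n ih =>
    rw [S_succ]
    have h2 : (f 0).toNat ≤ 1 := Bool.toNat_le _
    induction k using Fin.cases with
    | zero =>
      simp only [Fin.val_zero, Nat.testBit_zero]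
      cases h : f 0 <;> simp [h]
    | succ k =>
      have : ((f 0).toNat + 2 * S n (f ∘ Fin.succ)) / 2 = S n (f ∘ Fin.succ) := by omega
      rw [Fin.val_succ, Nat.testBit_succ, this, ih]
      rfl

lemma S_all_true (f : Fin n → Bool) (h : ∀ k, f k = true) : S n f = 2 ^ n - 1 := by
  induction n with
  | zero => simp [S]
  | succ n ih =>
    rw [S_succ, h 0, ih (f ∘ Fin.succ) (fun k => h k.succ)]
    have : 1 ≤ 2 ^ n := Nat.one_le_two_pow
    have : 2 ^ (n + 1) = 2 * 2 ^ n := by ring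
    simp only [Bool.toNat_true]
    omega

lemma S_succ_of (f g : Fin n → Bool) (K : Fin n)
    (hlow : ∀ k, k < K → f k = true ∧ g k = false)
    (hfK : f K = false) (hgK : g K = true)
    (hhigh : ∀ k, K < k → f k = g k) : S n g = S n f + 1 := by
  induction n with
  | zero => exact absurd K.isLt (by omega)
  | succ n ih =>
    rw [S_succ f, S_succ g]
    induction K using Fin.cases with
    | zero =>
      have ht : S n (f ∘ Fin.succ) = S n (g ∘ Fin.succ) := by
        congr 1
        funext k
        exact hhigh k.succ (Fin.succ_pos k)
      rw [hfK, hgK, ht]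
      simp only [Bool.toNat_true, Bool.toNat_false]
      omega
    | succ K =>
      have h0 := hlow 0 (Fin.succ_pos K)
      have ht : S n (g ∘ Fin.succ) = S n (f ∘ Fin.succ) + 1 := by
        refine ih _ _ K (fun k hk => hlow k.succ ?_) hfK hgK (fun k hk => hhigh k.succ ?_)
        · exact Fin.succ_lt_succ_iff.2 hk
        · exact Fin.succ_lt_succ_iff.2 hk
      rw [h0.1, h0.2, ht]
      simp only [Bool.toNat_true, Bool.toNat_false]
      omega

def rank (v : Fin n → Bool) : ℕ := S n (bv v)

lemma rank_lt (v : Fin n → Bool) : rank v < 2 ^ n := S_lt _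

lemma rank_testBit (v : Fin n → Bool) (k : Fin n) :
    (rank v).testBit (k : ℕ) = bv v k := S_testBit _ _

lemma pc_congr {x y : Fin n → Bool} {i : Fin n}
    (h : ∀ u, u < i → x u = y u) : pc x i = pc y i := by
  unfold pc
  congr 1
  apply Finset.filter_congr
  intro j _
  constructor
  · rintro ⟨hj, hx⟩; exact ⟨hj, (h j hj) ▸ hx⟩
  · rintro ⟨hj, hy⟩; exact ⟨hj, (h j hj) ▸ hy⟩

lemma rank_inj : Function.Injective (rank (n := n)) := by
  intro x y h
  have hbv : ∀ k, bv x k = bv y k := by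
    intro k
    rw [← rank_testBit, ← rank_testBit, h]
  have hrb : ∀ i, rb x i = rb y i := by
    intro i
    rw [rb_eq_bv, rb_eq_bv, hbv]
  have key : ∀ m : ℕ, ∀ i : Fin n, (i : ℕ) < m → x i = y i := by
    intro m
    induction m using Nat.strong_induction_on with
    | _ m ih =>
      intro i hi
      have hpc : pc x i = pc y i :=
        pc_congr (fun u hu => ih (u : ℕ).succ (by omega) u (by omega))
      have := hrb i
      unfold rb at this
      rw [hpc] at this
      cases h2 : decide (Odd (pc y i)) <;> rw [h2] at this <;>
        cases hx : x i <;> cases hy : y i <;> simp_all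
  funext i
  exact key ((i : ℕ) + 1) i (by omega)

section Edge

variable {x y : Fin n → Bool} {i : Fin n}
variable (hxy : ∀ u, u ≠ i → x u = y u) (hyi : y i = !(x i))

include hxy hyi

lemma pc_flip {j : Fin n} (hij : i < j) : Odd (pc y j) ↔ ¬ Odd (pc x j) := by
  cases hxi : x i with
  | true =>
    have hset : Finset.univ.filter (fun u : Fin n => u < j ∧ y u = false)
        = insert i (Finset.univ.filter (fun u : Fin n => u < j ∧ x u = false)) := by
      ext u
      simp only [Finset.mem_insert, Finset.mem_filter, Finset.mem_univ, true_and]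
      rcases eq_or_ne u i with rfl | hu
      · simp [hij, hyi, hxi]
      · rw [← hxy u hu]
        simp [hu]
    rw [pc, pc, hset, Finset.card_insert_of_notMem (by simp [hxi])]
    simp [Nat.odd_add_one]
  | false =>
    have hyi' : y i = true := by rw [hyi, hxi]; rfl
    have hset : Finset.univ.filter (fun u : Fin n => u < j ∧ x u = false)
        = insert i (Finset.univ.filter (fun u : Fin n => u < j ∧ y u = false)) := by
      ext u
      simp only [Finset.mem_insert, Finset.mem_filter, Finset.mem_univ, true_and]
      rcases eq_or_ne u i with rfl | hu
      · simp [hij, hxi]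
      · rw [hxy u hu]
        simp [hu]
    rw [pc, pc, hset, Finset.card_insert_of_notMem (by simp [hyi'])]
    simp [Nat.odd_add_one]

lemma pc_eq_of_le {j : Fin n} (hij : j ≤ i) : pc x j = pc y j :=
  pc_congr (fun u hu => hxy u (by intro h; subst h; exact absurd (lt_of_lt_of_le hu hij) (lt_irrefl _)))

lemma rb_edge_lt {j : Fin n} (hji : j < i) : rb y j = rb x j := by
  unfold rb
  rw [← pc_eq_of_le hxy hyi (le_of_lt hji), ← hxy j (ne_of_lt hji)]

lemma rb_edge_eq : rb y i = !(rb x i) := by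
  unfold rb
  rw [← pc_eq_of_le hxy hyi (le_refl i), hyi]
  cases x i <;> cases decide (Odd (pc x i)) <;> rfl

lemma rb_edge_gt {j : Fin n} (hij : i < j) : rb y j = !(rb x j) := by
  unfold rb
  rw [← hxy j (ne_of_gt hij)]
  have h := pc_flip hxy hyi hij
  by_cases hodd : Odd (pc x j)
  · have : ¬ Odd (pc y j) := by tauto
    simp [hodd, this]
  · have : Odd (pc y j) := by tauto
    simp [hodd, this]

lemma edge_rank_lt (hcond : rb x i = false) : rank x < rank y := by
  apply Nat.lt_of_testBit ((i.rev : ℕ))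
  · rw [rank_testBit x i.rev, ← rb_eq_bv, hcond]
  · rw [rank_testBit y i.rev, ← rb_eq_bv]
    rw [rb_edge_eq hxy hyi, hcond]
    rfl
  · intro j hj
    by_cases hjn : j < n
    · rw [show j = ((⟨j, hjn⟩ : Fin n) : ℕ) from rfl, rank_testBit, rank_testBit]
      unfold bv
      have hlt : (⟨j, hjn⟩ : Fin n).rev < i := by
        rw [← Fin.rev_rev i]
        apply Fin.rev_lt_rev.2
        exact hj
      rw [rb_edge_lt hxy hyi hlt]
    · have h1 : 2 ^ n ≤ 2 ^ j := Nat.pow_le_pow_right (by omega) (by omega)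
      rw [Nat.testBit_eq_false_of_lt (lt_of_lt_of_le (rank_lt x) h1),
        Nat.testBit_eq_false_of_lt (lt_of_lt_of_le (rank_lt y) h1)]

end Edge

lemma twe_rank_le {x y : Fin n → Bool} (h : TwE n x y) : rank x ≤ rank y := by
  rcases h with rfl | ⟨i, h1, h2, h3⟩
  · exact le_refl _
  · exact le_of_lt (edge_rank_lt h1 h2 ((rb_eq_false_iff x i).2 h3))

lemma reach_succ {x : Fin n → Bool} (h : ∃ k, bv x k = false) :
    ∃ y, TwE n x y ∧ rank y = rank x + 1 := by
  classical
  set s := Finset.univ.filter (fun k : Fin n => bv x k = false) with hsdef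
  have hs : s.Nonempty := by
    obtain ⟨k, hk⟩ := h
    exact ⟨k, by simp [hsdef, hk]⟩
  set K := s.min' hs with hKdef
  have hKmem : bv x K = false := by
    have := s.min'_mem hs
    simpa [hsdef] using this
  have hmin : ∀ k, k < K → bv x k = true := by
    intro k hk
    by_contra hc
    have hk' : bv x k = false := by
      cases h : bv x k
      · rfl
      · exact absurd h hc
    have : K ≤ k := s.min'_le k (by simp [hsdef, hk'])
    exact absurd hk (not_lt.2 this)
  set i := K.rev with hidef
  set y := Function.update x i (!(x i)) with hydef
  have hxy : ∀ u, u ≠ i → x u = y u := fun u hu => (Function.update_of_ne hu _ _).symm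
  have hyi : y i = !(x i) := Function.update_self _ _ _
  have hcond : rb x i = false := by
    rw [rb_eq_bv]
    simpa [hidef, Fin.rev_rev] using hKmem
  refine ⟨y, Or.inr ⟨i, hxy, hyi, (rb_eq_false_iff x i).1 hcond⟩, ?_⟩
  have hrev : i.rev = K := by rw [hidef, Fin.rev_rev]
  have hS : S n (bv y) = S n (bv x) + 1 := by
    apply S_succ_of (bv x) (bv y) K
    · intro k hk
      refine ⟨hmin k hk, ?_⟩
      have hik : i < k.rev := by
        rw [hidef]
        exact Fin.rev_lt_rev.2 hk
      have := rb_edge_gt hxy hyi hik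
      unfold bv
      rw [this]
      have : rb x k.rev = true := by rw [rb_eq_bv, Fin.rev_rev]; exact hmin k hk
      rw [this]
      rfl
    · exact hKmem
    · rw [show bv y K = rb y K.rev from rfl, ← hidef, rb_edge_eq hxy hyi, hcond]
      rfl
    · intro k hk
      have hki : k.rev < i := by
        rw [hidef]
        exact Fin.rev_lt_rev.2 hk
      unfold bv
      rw [rb_edge_lt hxy hyi hki]
  exact hS

lemma rtg_iff_rank_le (x y : Fin n → Bool) :
    Relation.ReflTransGen (TwE n) x y ↔ rank x ≤ rank y := by
  constructor
  · intro h
    induction h with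
    | refl => exact le_refl _
    | tail _ h2 ih => exact le_trans ih (twe_rank_le h2)
  · have key : ∀ d : ℕ, ∀ x y : Fin n → Bool, rank x ≤ rank y → rank y - rank x ≤ d →
        Relation.ReflTransGen (TwE n) x y := by
      intro d
      induction d with
      | zero =>
        intro x y h1 h2
        have : rank x = rank y := by omega
        rw [rank_inj this]
      | succ d ih =>
        intro x y h1 h2
        rcases eq_or_lt_of_le h1 with he | hl
        · rw [rank_inj he]
        · have hex : ∃ k, bv x k = false := by
            by_contra hc
            push_neg at hc
            have hall : ∀ k, bv x k = true := by
              intro k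
              cases h : bv x k
              · exact absurd h (hc k)
              · rfl
            have h3 := S_all_true (bv x) hall
            have h4 := rank_lt y
            have h5 : rank x = 2 ^ n - 1 := h3
            omega
          obtain ⟨z, hz1, hz2⟩ := reach_succ hex
          exact Relation.ReflTransGen.head hz1 (ih z y (by omega) (by omega))
    exact fun h => key (rank y - rank x) x y h (le_refl _)

def rankFin (v : Fin n → Bool) : Fin (2 ^ n) := ⟨rank v, rank_lt v⟩

lemma rankFin_bij : Function.Bijective (rankFin (n := n)) := by
  rw [Fintype.bijective_iff_injective_and_card]
  refine ⟨fun a b h => rank_inj (by simpa [rankFin, Fin.mk.injEq] using h), ?_⟩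
  simp

end Tw16

theorem stmt16 (n : ℕ) (g : (Fin n → Bool) ≃ Fin (2 ^ n))
    (hg : ∀ x y : Fin n → Bool,
      Relation.ReflTransGen (TwE n) x y ↔ g x ≤ g y)
    (v : Fin n → Bool) :
    {w : Fin n → Bool | w ≠ v ∧ TwE n v w}.ncard =
      {i : Fin n | Nat.testBit (g v : ℕ) (i : ℕ) = false}.ncard := by
  classical
  open Tw16 in
  -- g equals the explicit rank equivalence
  let G : (Fin n → Bool) ≃ Fin (2 ^ n) := Equiv.ofBijective rankFin rankFin_bij
  have hGval : ∀ w, (G w : ℕ) = rank w := fun w => rfl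
  have hgG : ∀ w, g w = G w := by
    let e : Fin (2 ^ n) ≃o Fin (2 ^ n) :=
      { toEquiv := G.symm.trans g
        map_rel_iff' := by
          intro a b
          simp only [Equiv.trans_apply]
          rw [← hg, rtg_iff_rank_le]
          have ha : rank (G.symm a) = (a : ℕ) := by
            rw [← hGval, Equiv.apply_symm_apply]
          have hb : rank (G.symm b) = (b : ℕ) := by
            rw [← hGval, Equiv.apply_symm_apply]
          rw [ha, hb]
          exact Iff.rfl }
    have he : e = OrderIso.refl _ := Subsingleton.elim _ _
    intro w
    have h1 : e (G w) = G w := by rw [he]; rfl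
    have h2 : e (G w) = g w := by
      show g (G.symm (G w)) = g w
      rw [Equiv.symm_apply_apply]
    rw [← h2, h1]
  have hval : (g v : ℕ) = rank v := by rw [hgG, hGval]
  -- LHS
  have hL : {w : Fin n → Bool | w ≠ v ∧ TwE n v w}
      = (fun i => Function.update v i (!(v i))) '' {i : Fin n | rb v i = false} := by
    ext w
    simp only [Set.mem_setOf_eq, Set.mem_image]
    constructor
    · rintro ⟨hne, hTwE⟩
      rcases hTwE with rfl | ⟨i, h1, h2, h3⟩
      · exact absurd rfl hne
      · refine ⟨i, (rb_eq_false_iff v i).2 h3, ?_⟩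
        funext j
        rcases eq_or_ne j i with rfl | hj
        · rw [Function.update_self, h2]
        · rw [Function.update_of_ne hj, h1 j hj]
    · rintro ⟨i, hi, rfl⟩
      refine ⟨?_, Or.inr ⟨i, fun j hj => (Function.update_of_ne hj _ _).symm,
        Function.update_self _ _ _, (rb_eq_false_iff v i).1 hi⟩⟩
      intro h
      have := congrFun h i
      rw [Function.update_self] at this
      cases hvi : v i <;> rw [hvi] at this <;> exact absurd this (by simp)
  -- RHS
  have hR : {i : Fin n | Nat.testBit (g v : ℕ) (i : ℕ) = false}
      = Fin.rev '' {i : Fin n | rb v i = false} := by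
    ext i
    simp only [Set.mem_setOf_eq, Set.mem_image]
    rw [hval]
    have ht : Nat.testBit (rank v) (i : ℕ) = bv v i := rank_testBit v i
    rw [ht]
    constructor
    · intro h
      exact ⟨i.rev, by rw [rb_eq_bv, Fin.rev_rev]; exact h, Fin.rev_rev i⟩
    · rintro ⟨j, hj, rfl⟩
      rw [bv, Fin.rev_rev]
      exact hj
  rw [hL, hR, Set.ncard_image_of_injective _ Fin.rev_injective,
    Set.ncard_image_of_injective]
  intro a b h
  by_contra hne
  have h1 : Function.update v a (!(v a)) a = Function.update v b (!(v b)) a := congrFun h a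
  rw [Function.update_self, Function.update_of_ne hne] at h1
  cases hva : v a <;> rw [hva] at h1 <;> exact absurd h1 (by simp)
end
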